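/- arXiv:2306.01796 — 11 statements merged into one kernel-verified Lean document; each statement's English description precedes it below -/
import Mathlib

section
/- Assume F is L-Lipschitz on Z and satisfies the error bound dist(z, Z*) ≤ (C̄/σ)·‖z − Π_Z(z − σF(z))‖ for all z ∈ Z and all σ > 0. Let α ∈ [0, 1), γ ∈ (0, 1), τ = γ·√(1−α)/L, and θ ∈ [0, 1]. Fix z, w ∈ Z, set z̄ = αz + (1−α)w and u = Π_Z(z̄ − τF(w)). Then τ²·(αL²/(6C̄²αL² + 8))·dist^θ_{Z*}(z, w) ≤ α‖z − u‖² + (1 − α)‖w − u‖². -/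
open Metric

/-- Weighted squared distance `Φ^θ_u(z,w) = θ‖z−u‖² + (1−θ)‖w−u‖²`, minimized over
`u` ranging in the solution set `Zstar`. -/
noncomputable def distTheta {V : Type*} [NormedAddCommGroup V] [InnerProductSpace ℝ V]
    (Zstar : Set V) (θ : ℝ) (z w : V) : ℝ :=
  sInf ((fun zs => θ * ‖z - zs‖ ^ 2 + (1 - θ) * ‖w - zs‖ ^ 2) '' Zstar)

set_option maxHeartbeats 1000000 in
/-- error bound in terms of the algorithm's iterates (Lemma 2). -/
theorem stmt_1
    {V : Type*} [NormedAddCommGroup V] [InnerProductSpace ℝ V] [FiniteDimensional ℝ V]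
    (Z : Set V) (hZne : Z.Nonempty) (hZcpt : IsCompact Z) (hZconv : Convex ℝ Z)
    (projZ : V → V)
    (hprojmem : ∀ x, projZ x ∈ Z)
    (hproj : ∀ x, ∀ y ∈ Z, (inner ℝ (x - projZ x) (y - projZ x) : ℝ) ≤ 0)
    (F : V → V) (L : ℝ) (hL : 0 < L)
    (hmono : ∀ z₁ ∈ Z, ∀ z₂ ∈ Z, (0 : ℝ) ≤ inner ℝ (F z₁ - F z₂) (z₁ - z₂))
    (hlip : ∀ z₁ ∈ Z, ∀ z₂ ∈ Z, ‖F z₁ - F z₂‖ ≤ L * ‖z₁ - z₂‖)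
    (Zstar : Set V)
    (hZstar : Zstar = {zs ∈ Z | ∀ z ∈ Z, (0 : ℝ) ≤ inner ℝ (F zs) (z - zs)})
    (hZstarNe : Zstar.Nonempty) (hZstarClosed : IsClosed Zstar)
    (C : ℝ) (hC : 0 < C)
    (heb : ∀ z ∈ Z, ∀ σ : ℝ, 0 < σ →
      infDist z Zstar ≤ (C / σ) * ‖z - projZ (z - σ • F z)‖)
    (α γ τ θ : ℝ) (hα0 : 0 ≤ α) (hα1 : α < 1) (hγ0 : 0 < γ) (hγ1 : γ < 1)
    (hτ : τ = γ * Real.sqrt (1 - α) / L) (hθ0 : 0 ≤ θ) (hθ1 : θ ≤ 1)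
    (z w zbar u : V) (hz : z ∈ Z) (hw : w ∈ Z)
    (hzbar : zbar = α • z + (1 - α) • w)
    (hu : u = projZ (zbar - τ • F w)) :
    τ ^ 2 * (α * L ^ 2 / (6 * C ^ 2 * α * L ^ 2 + 8)) * distTheta Zstar θ z w
      ≤ α * ‖z - u‖ ^ 2 + (1 - α) * ‖w - u‖ ^ 2 := by
  have hβ : (0:ℝ) < 1 - α := by linarith
  rcases eq_or_lt_of_le hα0 with hα | hαpos
  · -- case α = 0 : the left-hand side vanishes
    rw [← hα]
    have hco : (0:ℝ) * L ^ 2 / (6 * C ^ 2 * 0 * L ^ 2 + 8) = 0 := by norm_num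
    rw [hco]
    have h0 : τ ^ 2 * 0 * distTheta Zstar θ z w = 0 := by ring
    rw [h0]
    nlinarith [sq_nonneg ‖z - u‖, sq_nonneg ‖w - u‖]
  -- main case : 0 < α
  have hs0 : 0 < Real.sqrt (1 - α) := Real.sqrt_pos.mpr hβ
  set s := Real.sqrt (1 - α) with hs_def
  have hs2 : s ^ 2 = 1 - α := Real.sq_sqrt hβ.le
  have hs1 : s ≤ 1 := by
    rw [show (1:ℝ) = Real.sqrt 1 from (Real.sqrt_one).symm]
    exact Real.sqrt_le_sqrt (by linarith)
  have hτpos : 0 < τ := by rw [hτ]; exact div_pos (mul_pos hγ0 hs0) hL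
  have hτL : τ * L = γ * s := by rw [hτ]; field_simp
  have hτ2 : τ ^ 2 * L ^ 2 = γ ^ 2 * (1 - α) := by
    linear_combination (τ * L + γ * s) * hτL + γ ^ 2 * hs2
  have huZ : u ∈ Z := by rw [hu]; exact hprojmem _
  -- nonexpansiveness of projZ
  have hnonexp : ∀ x y : V, ‖projZ x - projZ y‖ ≤ ‖x - y‖ := by
    intro x y
    have h1 := hproj x (projZ y) (hprojmem y)
    have h2 := hproj y (projZ x) (hprojmem x)
    have e0 : x - y = (x - projZ x) + (projZ x - projZ y) + (projZ y - y) := by abel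
    have e1 : (inner ℝ (x - y) (projZ x - projZ y) : ℝ)
        = inner ℝ (x - projZ x) (projZ x - projZ y)
          + inner ℝ (projZ x - projZ y) (projZ x - projZ y)
          + inner ℝ (projZ y - y) (projZ x - projZ y) := by
      rw [e0, inner_add_left, inner_add_left]
    have e2 : (inner ℝ (x - projZ x) (projZ x - projZ y) : ℝ)
        = -(inner ℝ (x - projZ x) (projZ y - projZ x)) := by
      rw [← inner_neg_right, neg_sub]
    have e3 : (inner ℝ (projZ y - y) (projZ x - projZ y) : ℝ)
        = -(inner ℝ (y - projZ y) (projZ x - projZ y)) := by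
      rw [← inner_neg_left, neg_sub]
    have e4 : (inner ℝ (projZ x - projZ y) (projZ x - projZ y) : ℝ)
        = ‖projZ x - projZ y‖ ^ 2 := real_inner_self_eq_norm_sq _
    have key : ‖projZ x - projZ y‖ ^ 2 ≤ ‖x - y‖ * ‖projZ x - projZ y‖ := by
      have h5 : (inner ℝ (x - y) (projZ x - projZ y) : ℝ)
          ≤ ‖x - y‖ * ‖projZ x - projZ y‖ := real_inner_le_norm _ _
      linarith [e1, e2, e3, e4]
    nlinarith [norm_nonneg (projZ x - projZ y), norm_nonneg (x - y)]
  set a := ‖z - u‖ with ha_def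
  set b := ‖w - u‖ with hb_def
  have ha0 : 0 ≤ a := norm_nonneg _
  have hb0 : 0 ≤ b := norm_nonneg _
  -- residual bound at u
  have hzbu : ‖zbar - u‖ ≤ α * a + (1 - α) * b := by
    have e : zbar - u = α • (z - u) + (1 - α) • (w - u) := by rw [hzbar]; module
    rw [e]
    calc ‖α • (z - u) + (1 - α) • (w - u)‖
        ≤ ‖α • (z - u)‖ + ‖(1 - α) • (w - u)‖ := norm_add_le _ _
      _ = α * a + (1 - α) * b := by
          rw [norm_smul, norm_smul, Real.norm_of_nonneg hα0, Real.norm_of_nonneg hβ.le]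
  have hresid : ‖u - projZ (u - τ • F u)‖ ≤ α * a + (1 - α) * b + τ * (L * b) := by
    have e1 : u - projZ (u - τ • F u) = projZ (zbar - τ • F w) - projZ (u - τ • F u) := by
      rw [← hu]
    rw [e1]
    have e2 : (zbar - τ • F w) - (u - τ • F u) = (zbar - u) + τ • (F u - F w) := by module
    calc ‖projZ (zbar - τ • F w) - projZ (u - τ • F u)‖
        ≤ ‖(zbar - τ • F w) - (u - τ • F u)‖ := hnonexp _ _
      _ = ‖(zbar - u) + τ • (F u - F w)‖ := by rw [e2]
      _ ≤ ‖zbar - u‖ + ‖τ • (F u - F w)‖ := norm_add_le _ _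
      _ = ‖zbar - u‖ + τ * ‖F u - F w‖ := by
          rw [norm_smul, Real.norm_of_nonneg hτpos.le]
      _ ≤ (α * a + (1 - α) * b) + τ * (L * ‖u - w‖) := by
          have h := hlip u huZ w hw
          have hτ0 := hτpos.le
          gcongr
      _ = α * a + (1 - α) * b + τ * (L * b) := by rw [norm_sub_rev u w]
  -- pick the closest solution to u
  obtain ⟨zs, hzs, hdist⟩ := hZstarClosed.exists_infDist_eq_dist hZstarNe u
  set d := dist u zs with hd_def
  have hd0 : 0 ≤ d := dist_nonneg
  have hd2 : d ≤ (C / τ) * (α * a + (1 - α) * b + τ * (L * b)) := by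
    rw [← hdist]
    exact (heb u huZ τ hτpos).trans
      (mul_le_mul_of_nonneg_left hresid (div_pos hC hτpos).le)
  have hkey1 : γ * s * d ≤ C * L * (α * a + (1 - α) * b + γ * s * b) := by
    have h := mul_le_mul_of_nonneg_left hd2 (mul_pos hτpos hL).le
    have e : τ * L * ((C / τ) * (α * a + (1 - α) * b + τ * (L * b)))
        = C * L * (α * a + (1 - α) * b + (τ * L) * b) := by
      field_simp
    rw [e, hτL] at h
    exact h
  have hR0 : 0 ≤ α * a ^ 2 + (1 - α) * b ^ 2 :=
    add_nonneg (mul_nonneg hα0 (sq_nonneg a)) (mul_nonneg hβ.le (sq_nonneg b))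
  -- Cauchy–Schwarz type bound
  have hc2 : ((1 - α) + γ * s) ^ 2 = (1 - α) * (s + γ) ^ 2 := by
    rw [← hs2]; ring
  have hCSgen : ∀ c : ℝ, (α * a + c * b) ^ 2 * (1 - α)
      ≤ (α * (1 - α) + c ^ 2) * (α * a ^ 2 + (1 - α) * b ^ 2) := by
    intro c
    linarith [mul_nonneg hα0 (sq_nonneg (c * a - (1 - α) * b))]
  have hCS := hCSgen ((1 - α) + γ * s)
  have hcoef : α * (1 - α) + ((1 - α) + γ * s) ^ 2 ≤ 4 * (1 - α) := by
    rw [hc2]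
    have hsg : s * γ ≤ 1 := mul_le_one₀ hs1 hγ0.le hγ1.le
    have hγsq : γ ^ 2 ≤ 1 := by nlinarith
    have h7 : (0:ℝ) ≤ (1 - α) * (3 - 2 * (s * γ) - γ ^ 2) :=
      mul_nonneg hβ.le (by linarith)
    have hsum : (s + γ) ^ 2 = (1 - α) + 2 * (s * γ) + γ ^ 2 := by
      linear_combination hs2
    rw [hsum]
    nlinarith [h7]
  have h4R : (α * a + ((1 - α) + γ * s) * b) ^ 2 ≤ 4 * (α * a ^ 2 + (1 - α) * b ^ 2) := by
    have h2 := mul_le_mul_of_nonneg_right hcoef hR0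
    have h3 : (α * a + ((1 - α) + γ * s) * b) ^ 2 * (1 - α)
        ≤ 4 * (α * a ^ 2 + (1 - α) * b ^ 2) * (1 - α) := by linarith [hCS, h2]
    exact le_of_mul_le_mul_right h3 hβ
  have hH2 : γ ^ 2 * (1 - α) * d ^ 2
      ≤ 4 * C ^ 2 * L ^ 2 * (α * a ^ 2 + (1 - α) * b ^ 2) := by
    have hkey1' : γ * s * d ≤ C * L * (α * a + ((1 - α) + γ * s) * b) := by
      calc γ * s * d ≤ C * L * (α * a + (1 - α) * b + γ * s * b) := hkey1
        _ = C * L * (α * a + ((1 - α) + γ * s) * b) := by ring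
    have hsq : (γ * s * d) ^ 2 ≤ (C * L * (α * a + ((1 - α) + γ * s) * b)) ^ 2 :=
      pow_le_pow_left₀ (mul_nonneg (mul_nonneg hγ0.le hs0.le) hd0) hkey1' 2
    have e : (γ * s * d) ^ 2 = γ ^ 2 * (1 - α) * d ^ 2 := by rw [← hs2]; ring
    calc γ ^ 2 * (1 - α) * d ^ 2 = (γ * s * d) ^ 2 := e.symm
      _ ≤ (C * L * (α * a + ((1 - α) + γ * s) * b)) ^ 2 := hsq
      _ = (C * L) ^ 2 * (α * a + ((1 - α) + γ * s) * b) ^ 2 := by ring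
      _ ≤ (C * L) ^ 2 * (4 * (α * a ^ 2 + (1 - α) * b ^ 2)) :=
          mul_le_mul_of_nonneg_left h4R (by positivity)
      _ = 4 * C ^ 2 * L ^ 2 * (α * a ^ 2 + (1 - α) * b ^ 2) := by ring
  -- bound distTheta
  have hz1 : ‖z - zs‖ ≤ a + d := by
    have e : z - zs = (z - u) + (u - zs) := by abel
    rw [e]
    calc ‖(z - u) + (u - zs)‖ ≤ ‖z - u‖ + ‖u - zs‖ := norm_add_le _ _
      _ = a + d := by rw [hd_def, dist_eq_norm]
  have hw1 : ‖w - zs‖ ≤ b + d := by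
    have e : w - zs = (w - u) + (u - zs) := by abel
    rw [e]
    calc ‖(w - u) + (u - zs)‖ ≤ ‖w - u‖ + ‖u - zs‖ := norm_add_le _ _
      _ = b + d := by rw [hd_def, dist_eq_norm]
  have hDT : distTheta Zstar θ z w ≤ θ * ‖z - zs‖ ^ 2 + (1 - θ) * ‖w - zs‖ ^ 2 := by
    apply csInf_le
    · refine ⟨0, ?_⟩
      rintro y ⟨p, hp, rfl⟩
      exact add_nonneg (mul_nonneg hθ0 (sq_nonneg _))
        (mul_nonneg (by linarith) (sq_nonneg _))
    · exact ⟨zs, hzs, rfl⟩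
  have hΦ : θ * ‖z - zs‖ ^ 2 + (1 - θ) * ‖w - zs‖ ^ 2
      ≤ θ * (a + d) ^ 2 + (1 - θ) * (b + d) ^ 2 := by
    have h1 : ‖z - zs‖ ^ 2 ≤ (a + d) ^ 2 := pow_le_pow_left₀ (norm_nonneg _) hz1 2
    have h2 : ‖w - zs‖ ^ 2 ≤ (b + d) ^ 2 := pow_le_pow_left₀ (norm_nonneg _) hw1 2
    have h3 := mul_le_mul_of_nonneg_left h1 hθ0
    have h4 := mul_le_mul_of_nonneg_left h2 (by linarith : (0:ℝ) ≤ 1 - θ)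
    linarith only [h3, h4]
  have hΦ2 : θ * (a + d) ^ 2 + (1 - θ) * (b + d) ^ 2
      ≤ 3 * a ^ 2 + 3 * b ^ 2 + (3 / 2) * d ^ 2 := by
    have h1 : (a + d) ^ 2 ≤ 3 * a ^ 2 + (3 / 2) * d ^ 2 := by
      linarith only [sq_nonneg (2 * a - d)]
    have h2 : (b + d) ^ 2 ≤ 3 * b ^ 2 + (3 / 2) * d ^ 2 := by
      linarith only [sq_nonneg (2 * b - d)]
    have h3 := mul_le_mul_of_nonneg_left h1 hθ0
    have h4 := mul_le_mul_of_nonneg_left h2 (by linarith : (0:ℝ) ≤ 1 - θ)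
    have h5 : (0:ℝ) ≤ (1 - θ) * a ^ 2 := mul_nonneg (by linarith) (sq_nonneg a)
    have h6 : (0:ℝ) ≤ θ * b ^ 2 := mul_nonneg hθ0 (sq_nonneg b)
    linarith only [h3, h4, h5, h6]
  have hQ : distTheta Zstar θ z w ≤ 3 * a ^ 2 + 3 * b ^ 2 + (3 / 2) * d ^ 2 :=
    hDT.trans (hΦ.trans hΦ2)
  have hDpos : (0:ℝ) < 6 * C ^ 2 * α * L ^ 2 + 8 := by
    linarith only [mul_nonneg (mul_nonneg (by positivity : (0:ℝ) ≤ 6 * C ^ 2) hα0) (sq_nonneg L)]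
  have hcoefpos : (0:ℝ) ≤ τ ^ 2 * (α * L ^ 2 / (6 * C ^ 2 * α * L ^ 2 + 8)) :=
    mul_nonneg (sq_nonneg τ)
      (div_nonneg (mul_nonneg hα0 (sq_nonneg L)) hDpos.le)
  calc τ ^ 2 * (α * L ^ 2 / (6 * C ^ 2 * α * L ^ 2 + 8)) * distTheta Zstar θ z w
      ≤ τ ^ 2 * (α * L ^ 2 / (6 * C ^ 2 * α * L ^ 2 + 8))
          * (3 * a ^ 2 + 3 * b ^ 2 + (3 / 2) * d ^ 2) :=
        mul_le_mul_of_nonneg_left hQ hcoefpos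
    _ ≤ α * a ^ 2 + (1 - α) * b ^ 2 := by
        rw [show τ ^ 2 * (α * L ^ 2 / (6 * C ^ 2 * α * L ^ 2 + 8))
              * (3 * a ^ 2 + 3 * b ^ 2 + (3 / 2) * d ^ 2)
            = τ ^ 2 * α * L ^ 2 * (3 * a ^ 2 + 3 * b ^ 2 + (3 / 2) * d ^ 2)
              / (6 * C ^ 2 * α * L ^ 2 + 8) from by ring]
        rw [div_le_iff₀ hDpos]
        have e : τ ^ 2 * α * L ^ 2 * (3 * a ^ 2 + 3 * b ^ 2 + (3 / 2) * d ^ 2)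
            = γ ^ 2 * (1 - α) * α * (3 * a ^ 2 + 3 * b ^ 2)
              + (3 / 2) * α * (γ ^ 2 * (1 - α) * d ^ 2) := by
          linear_combination (3 * a ^ 2 + 3 * b ^ 2 + (3 / 2) * d ^ 2) * α * hτ2
        rw [e]
        have p1 : γ ^ 2 * (1 - α) * α * (3 * a ^ 2 + 3 * b ^ 2)
            ≤ 3 * (α * a ^ 2 + (1 - α) * b ^ 2) := by
          have hγsq : γ ^ 2 ≤ 1 := by nlinarith only [hγ0, hγ1]
          have hg1 : γ ^ 2 * (1 - α) ≤ 1 * (1 - α) :=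
            mul_le_mul_of_nonneg_right hγsq hβ.le
          have hg2 : γ ^ 2 * α ≤ 1 * α :=
            mul_le_mul_of_nonneg_right hγsq hα0
          have h1 : (0:ℝ) ≤ (1 - γ ^ 2 * (1 - α)) * (α * a ^ 2) := by
            apply mul_nonneg _ (mul_nonneg hα0 (sq_nonneg a))
            linarith only [hg1, hα0]
          have h2 : (0:ℝ) ≤ (1 - γ ^ 2 * α) * ((1 - α) * b ^ 2) := by
            apply mul_nonneg _ (mul_nonneg hβ.le (sq_nonneg b))
            linarith only [hg2, hα1]
          linarith only [h1, h2]
        have p2 := mul_le_mul_of_nonneg_left hH2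
          (by linarith only [hαpos] : (0:ℝ) ≤ (3:ℝ) / 2 * α)
        linarith only [p1, p2, hR0]
end

section
/- Let α ∈ [0, 1), γ ∈ (0, 1), and 0 < τ ≤ γ·√(1−α)/L. Fix z, w ∈ Z, set z̄ = αz + (1−α)w, u = Π_Z(z̄ − τF(w)), and for each ω ∈ Ω let z⁺(ω) = Π_Z(z̄ − τ·(F(w) + F_ω(u) − F_ω(w))). Then for every z* ∈ Z*: ∫_Ω ‖z⁺(ω) − z*‖² dμ(ω) ≤ α‖z − z*‖² + (1 − α)‖w − z*‖² − ((1 − α) − τ²L²/γ)·‖u − w‖² − α‖z − u‖². -/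
open Metric MeasureTheory

lemma aux_comb {V : Type*} [NormedAddCommGroup V] [InnerProductSpace ℝ V]
    (α : ℝ) (z w x : V) :
    ‖(α • z + (1 - α) • w) - x‖ ^ 2
      = α * ‖z - x‖ ^ 2 + (1 - α) * ‖w - x‖ ^ 2 - α * (1 - α) * ‖z - w‖ ^ 2 := by
  have h1 : (α • z + (1 - α) • w) - x = α • (z - x) + (1 - α) • (w - x) := by
    module
  have e : ‖z - w‖ ^ 2 = ‖z - x‖ ^ 2 - 2 * (inner ℝ (z - x) (w - x) : ℝ) + ‖w - x‖ ^ 2 := by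
    rw [show z - w = (z - x) - (w - x) by abel, norm_sub_sq_real]
  rw [h1, norm_add_sq_real, real_inner_smul_left, real_inner_smul_right,
    norm_smul, norm_smul, Real.norm_eq_abs, Real.norm_eq_abs, mul_pow, mul_pow,
    sq_abs, sq_abs]
  linear_combination α * (1 - α) * e

lemma aux_pt {V : Type*} [NormedAddCommGroup V] [InnerProductSpace ℝ V]
    (a u p zs fw g q : V) (τ γ : ℝ) (hτ0 : 0 < τ) (hγ0 : 0 < γ) (hγ1 : γ ≤ 1)
    (hq : q = g - fw)
    (hA : (inner ℝ (a - τ • g - p) (zs - p) : ℝ) ≤ 0)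
    (hB : (inner ℝ (a - τ • fw - u) (p - u) : ℝ) ≤ 0) :
    ‖p - zs‖ ^ 2 ≤ ‖a - zs‖ ^ 2 - ‖a - u‖ ^ 2 + τ ^ 2 / γ * ‖q‖ ^ 2
      - 2 * τ * (inner ℝ g (u - zs) : ℝ) := by
  have e1 : ‖a - zs‖ ^ 2 = ‖a - p‖ ^ 2 + 2 * (inner ℝ (a - p) (p - zs) : ℝ) + ‖p - zs‖ ^ 2 := by
    rw [show a - zs = (a - p) + (p - zs) by abel, norm_add_sq_real]
  have e2 : ‖a - p‖ ^ 2 = ‖a - u‖ ^ 2 + 2 * (inner ℝ (a - u) (u - p) : ℝ) + ‖u - p‖ ^ 2 := by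
    rw [show a - p = (a - u) + (u - p) by abel, norm_add_sq_real]
  have hA' : (inner ℝ (a - p) (zs - p) : ℝ) - τ * (inner ℝ g (zs - p) : ℝ) ≤ 0 := by
    have := hA
    rw [show a - τ • g - p = (a - p) - τ • g by abel, inner_sub_left,
      real_inner_smul_left] at this
    linarith
  have hB' : (inner ℝ (a - u) (p - u) : ℝ) - τ * (inner ℝ fw (p - u) : ℝ) ≤ 0 := by
    have := hB
    rw [show a - τ • fw - u = (a - u) - τ • fw by abel, inner_sub_left,
      real_inner_smul_left] at this
    linarith
  have flip1 : (inner ℝ (a - p) (zs - p) : ℝ) = -(inner ℝ (a - p) (p - zs) : ℝ) := by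
    rw [show zs - p = -(p - zs) by abel, inner_neg_right]
  have flip2 : (inner ℝ (a - u) (p - u) : ℝ) = -(inner ℝ (a - u) (u - p) : ℝ) := by
    rw [show p - u = -(u - p) by abel, inner_neg_right]
  have split1 : (inner ℝ g (zs - p) : ℝ)
      = -(inner ℝ g (u - zs) : ℝ) + (inner ℝ g (u - p) : ℝ) := by
    rw [show zs - p = -(u - zs) + (u - p) by abel, inner_add_right, inner_neg_right]
  have split2 : (inner ℝ fw (p - u) : ℝ) + (inner ℝ g (u - p) : ℝ) = (inner ℝ q (u - p) : ℝ) := by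
    rw [hq, inner_sub_left, show p - u = -(u - p) by abel, inner_neg_right]
    ring
  -- scaled versions by τ
  have split1τ : τ * (inner ℝ g (zs - p) : ℝ)
      = -(τ * (inner ℝ g (u - zs) : ℝ)) + τ * (inner ℝ g (u - p) : ℝ) := by
    rw [split1]; ring
  have split2τ : τ * (inner ℝ fw (p - u) : ℝ) + τ * (inner ℝ g (u - p) : ℝ)
      = τ * (inner ℝ q (u - p) : ℝ) := by
    rw [← split2]; ring
  have cauchy : τ * (inner ℝ q (u - p) : ℝ) ≤ τ * (‖q‖ * ‖u - p‖) :=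
    mul_le_mul_of_nonneg_left (real_inner_le_norm q (u - p)) hτ0.le
  have young : 2 * (τ * (‖q‖ * ‖u - p‖)) ≤ τ ^ 2 / γ * ‖q‖ ^ 2 + γ * ‖u - p‖ ^ 2 := by
    rw [div_mul_eq_mul_div, ← sub_le_iff_le_add, le_div_iff₀ hγ0]
    nlinarith [sq_nonneg (τ * ‖q‖ - γ * ‖u - p‖)]
  have drop : γ * ‖u - p‖ ^ 2 ≤ ‖u - p‖ ^ 2 := by nlinarith [sq_nonneg ‖u - p‖]
  linarith

lemma aux_Fu_nonneg {V : Type*} [NormedAddCommGroup V] [InnerProductSpace ℝ V]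
    (Fu Fzs u zs : V)
    (h1 : (0 : ℝ) ≤ inner ℝ Fzs (u - zs))
    (h2 : (0 : ℝ) ≤ inner ℝ (Fu - Fzs) (u - zs)) :
    (0 : ℝ) ≤ inner ℝ Fu (u - zs) := by
  rw [inner_sub_left] at h2; linarith

/-- one-step iteration decrease inequality for loopless SVRG-EG
(expectation over the sampled oracle index). -/
theorem stmt_2
    {V : Type*} [NormedAddCommGroup V] [InnerProductSpace ℝ V] [FiniteDimensional ℝ V]
    (Z : Set V) (hZne : Z.Nonempty) (hZcpt : IsCompact Z) (hZconv : Convex ℝ Z)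
    (projZ : V → V)
    (hprojmem : ∀ x, projZ x ∈ Z)
    (hproj : ∀ x, ∀ y ∈ Z, (inner ℝ (x - projZ x) (y - projZ x) : ℝ) ≤ 0)
    (F : V → V) (L : ℝ) (hL : 0 < L)
    (hmono : ∀ z₁ ∈ Z, ∀ z₂ ∈ Z, (0 : ℝ) ≤ inner ℝ (F z₁ - F z₂) (z₁ - z₂))
    (Zstar : Set V)
    (hZstar : Zstar = {zs ∈ Z | ∀ z ∈ Z, (0 : ℝ) ≤ inner ℝ (F zs) (z - zs)})
    (hZstarNe : Zstar.Nonempty) (hZstarClosed : IsClosed Zstar)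
    {Ω : Type*} [MeasurableSpace Ω] (P : Measure Ω) [IsProbabilityMeasure P]
    (Fo : Ω → V → V)
    (hFmeas : ∀ x : V, AEStronglyMeasurable (fun ω => Fo ω x) P)
    (hFint : ∀ x ∈ Z, Integrable (fun ω => Fo ω x) P)
    (hunb : ∀ x ∈ Z, ∫ ω, Fo ω x ∂P = F x)
    (hsqint : ∀ x ∈ Z, ∀ y ∈ Z, Integrable (fun ω => ‖Fo ω x - Fo ω y‖ ^ 2) P)
    (hlipmean : ∀ x ∈ Z, ∀ y ∈ Z,
      ∫ ω, ‖Fo ω x - Fo ω y‖ ^ 2 ∂P ≤ L ^ 2 * ‖x - y‖ ^ 2)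
    (α γ τ : ℝ) (hα0 : 0 ≤ α) (hα1 : α < 1) (hγ0 : 0 < γ) (hγ1 : γ < 1)
    (hτ0 : 0 < τ) (hτ : τ ≤ γ * Real.sqrt (1 - α) / L)
    (z w zbar u : V) (hz : z ∈ Z) (hw : w ∈ Z)
    (hzbar : zbar = α • z + (1 - α) • w)
    (hu : u = projZ (zbar - τ • F w))
    (zp : Ω → V)
    (hzp : ∀ ω, zp ω = projZ (zbar - τ • (F w + Fo ω u - Fo ω w))) :
    ∀ zs ∈ Zstar,
      ∫ ω, ‖zp ω - zs‖ ^ 2 ∂P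
        ≤ α * ‖z - zs‖ ^ 2 + (1 - α) * ‖w - zs‖ ^ 2
          - ((1 - α) - τ ^ 2 * L ^ 2 / γ) * ‖u - w‖ ^ 2 - α * ‖z - u‖ ^ 2 := by
  intro zs hzs
  rw [hZstar] at hzs
  obtain ⟨hzsZ, hvi⟩ := hzs
  have huZ : u ∈ Z := hu ▸ hprojmem _
  -- pointwise inequality
  have hpt : ∀ ω, ‖zp ω - zs‖ ^ 2
      ≤ (‖zbar - zs‖ ^ 2 - ‖zbar - u‖ ^ 2) + τ ^ 2 / γ * ‖Fo ω u - Fo ω w‖ ^ 2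
        - 2 * τ * (inner ℝ (F w + Fo ω u - Fo ω w) (u - zs) : ℝ) := by
    intro ω
    have hpZ : zp ω ∈ Z := by rw [hzp ω]; exact hprojmem _
    have hA : (inner ℝ (zbar - τ • (F w + Fo ω u - Fo ω w) - zp ω) (zs - zp ω) : ℝ) ≤ 0 := by
      rw [hzp ω]; exact hproj _ zs hzsZ
    have hB : (inner ℝ (zbar - τ • F w - u) (zp ω - u) : ℝ) ≤ 0 := by
      rw [hu]; exact hproj _ (zp ω) hpZ
    have := aux_pt zbar u (zp ω) zs (F w) (F w + Fo ω u - Fo ω w) (Fo ω u - Fo ω w)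
      τ γ hτ0 hγ0 hγ1.le (by abel) hA hB
    linarith
  -- integrability
  have hIq : Integrable (fun ω => ‖Fo ω u - Fo ω w‖ ^ 2) P := hsqint u huZ w hw
  have hIu : Integrable (fun ω => Fo ω u) P := hFint u huZ
  have hIw : Integrable (fun ω => Fo ω w) P := hFint w hw
  have hIg : Integrable (fun ω => F w + Fo ω u - Fo ω w) P :=
    ((integrable_const (F w)).add hIu).sub hIw
  have hginn : Integrable (fun ω => (inner ℝ (F w + Fo ω u - Fo ω w) (u - zs) : ℝ)) P :=
    hIg.inner_const _
  have hIh : Integrable (fun ω =>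
      (‖zbar - zs‖ ^ 2 - ‖zbar - u‖ ^ 2) + τ ^ 2 / γ * ‖Fo ω u - Fo ω w‖ ^ 2
        - 2 * τ * (inner ℝ (F w + Fo ω u - Fo ω w) (u - zs) : ℝ)) P :=
    ((integrable_const _).add (hIq.const_mul _)).sub (hginn.const_mul _)
  have key := integral_mono_of_nonneg (ae_of_all _ fun ω => sq_nonneg (‖zp ω - zs‖))
    hIh (ae_of_all _ hpt)
  -- expectation of the oracle
  have hIc5 : Integrable (fun _ : Ω => F w) P := integrable_const _
  have hI4 : Integrable (fun ω => F w + Fo ω u) P := hIc5.add hIu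
  have hEg : ∫ ω, (F w + Fo ω u - Fo ω w) ∂P = F u := by
    rw [integral_sub hI4 hIw, integral_add hIc5 hIu, integral_const, hunb u huZ, hunb w hw]
    rw [probReal_univ, one_smul]; abel
  have hEinn : ∫ ω, (inner ℝ (F w + Fo ω u - Fo ω w) (u - zs) : ℝ) ∂P
      = (inner ℝ (F u) (u - zs) : ℝ) := by
    have hc : (fun ω => (inner ℝ (F w + Fo ω u - Fo ω w) (u - zs) : ℝ))
        = fun ω => (inner ℝ (u - zs) (F w + Fo ω u - Fo ω w) : ℝ) :=
      funext fun ω => real_inner_comm _ _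
    rw [hc, integral_inner hIg, hEg, real_inner_comm]
  have hsplit : ∫ ω, ((‖zbar - zs‖ ^ 2 - ‖zbar - u‖ ^ 2)
        + τ ^ 2 / γ * ‖Fo ω u - Fo ω w‖ ^ 2
        - 2 * τ * (inner ℝ (F w + Fo ω u - Fo ω w) (u - zs) : ℝ)) ∂P
      = (‖zbar - zs‖ ^ 2 - ‖zbar - u‖ ^ 2)
        + τ ^ 2 / γ * (∫ ω, ‖Fo ω u - Fo ω w‖ ^ 2 ∂P)
        - 2 * τ * (inner ℝ (F u) (u - zs) : ℝ) := by
    have hIc : Integrable (fun _ : Ω => ‖zbar - zs‖ ^ 2 - ‖zbar - u‖ ^ 2) P :=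
      integrable_const _
    have hIq' : Integrable (fun ω => τ ^ 2 / γ * ‖Fo ω u - Fo ω w‖ ^ 2) P :=
      hIq.const_mul _
    have hI2 : Integrable (fun ω => (‖zbar - zs‖ ^ 2 - ‖zbar - u‖ ^ 2)
        + τ ^ 2 / γ * ‖Fo ω u - Fo ω w‖ ^ 2) P := hIc.add hIq'
    have hI3 : Integrable
        (fun ω => 2 * τ * (inner ℝ (F w + Fo ω u - Fo ω w) (u - zs) : ℝ)) P :=
      hginn.const_mul _
    rw [integral_sub hI2 hI3, integral_add hIc hIq', integral_const,
      integral_const_mul, integral_const_mul, hEinn]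
    simp
  have hFu : (0 : ℝ) ≤ inner ℝ (F u) (u - zs) :=
    aux_Fu_nonneg (F u) (F zs) u zs (hvi u huZ) (hmono u huZ zs hzsZ)
  have hlip := hlipmean u huZ w hw
  have m1 : τ ^ 2 / γ * (∫ ω, ‖Fo ω u - Fo ω w‖ ^ 2 ∂P)
      ≤ τ ^ 2 / γ * (L ^ 2 * ‖u - w‖ ^ 2) :=
    mul_le_mul_of_nonneg_left hlip (by positivity)
  have m2 : (0 : ℝ) ≤ 2 * τ * (inner ℝ (F u) (u - zs) : ℝ) :=
    mul_nonneg (by linarith) hFu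
  have hK1 : ‖zbar - zs‖ ^ 2
      = α * ‖z - zs‖ ^ 2 + (1 - α) * ‖w - zs‖ ^ 2 - α * (1 - α) * ‖z - w‖ ^ 2 := by
    rw [hzbar]; exact aux_comb α z w zs
  have hK2 : ‖zbar - u‖ ^ 2
      = α * ‖z - u‖ ^ 2 + (1 - α) * ‖w - u‖ ^ 2 - α * (1 - α) * ‖z - w‖ ^ 2 := by
    rw [hzbar]; exact aux_comb α z w u
  have hwu : ‖w - u‖ ^ 2 = ‖u - w‖ ^ 2 := by rw [norm_sub_rev]
  rw [hsplit] at key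
  have hfin : τ ^ 2 / γ * (L ^ 2 * ‖u - w‖ ^ 2) = τ ^ 2 * L ^ 2 / γ * ‖u - w‖ ^ 2 := by
    ring
  nlinarith [key, m1, m2, hK1, hK2, hwu, hfin]
end

section
/- (One-step linear contraction of loopless SVRG-EG under error bounds.) Assume additionally the error bound dist(z, Z*) ≤ (C̄/σ)·‖z − Π_Z(z − σF(z))‖ for all z ∈ Z and all σ > 0. Let p ∈ (0, 1], α ∈ [0, 1), γ ∈ (0, 1), τ = γ·√(1−α)/L, and θ = α/(α + (1−α)/p). Fix z, w ∈ Z; set z̄ = αz + (1−α)w, u = Π_Z(z̄ − τF(w)), z⁺(ω) = Π_Z(z̄ − τ·(F(w) + F_ω(u) − F_ω(w))), and let w⁺(ω, b) equal z⁺(ω) if b = 1 and w if b = 0, where b is a Bernoulli(p) random variable independent of ω. Then E_{(ω,b)∼μ⊗Ber(p)}[dist^θ_{Z*}(z⁺(ω), w⁺(ω, b))] ≤ ρ·dist^θ_{Z*}(z, w), where ρ = 1 − τ²·(1 − γ)·αL² / ((4C̄²αL² + 8)·(α + (1−α)/p)). -/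
open Metric MeasureTheory
open RealInnerProductSpace

set_option maxHeartbeats 1000000


open Metric MeasureTheory RealInnerProductSpace

section Aux
variable {V : Type*} [NormedAddCommGroup V] [InnerProductSpace ℝ V]

lemma young_sq (S X Y : ℝ) (hS0 : 0 < S) (hS1 : S < 1) :
    (X + Y) ^ 2 ≤ X ^ 2 / S + Y ^ 2 / (1 - S) := by
  have h1 : (0:ℝ) < 1 - S := by linarith
  have h : X ^ 2 / S + Y ^ 2 / (1 - S) - (X + Y) ^ 2
      = ((1 - S) * X - S * Y) ^ 2 / (S * (1 - S)) := by
    field_simp; ring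
  nlinarith [div_nonneg (sq_nonneg ((1 - S) * X - S * Y)) (le_of_lt (mul_pos hS0 h1))]

lemma young_norm (S : ℝ) (hS0 : 0 < S) (hS1 : S < 1) (x y : V) :
    ‖x + y‖ ^ 2 ≤ ‖x‖ ^ 2 / S + ‖y‖ ^ 2 / (1 - S) := by
  refine le_trans ?_ (young_sq S ‖x‖ ‖y‖ hS0 hS1)
  have := norm_add_le x y
  nlinarith [norm_nonneg (x + y), norm_nonneg x, norm_nonneg y]

lemma comb_sq (α : ℝ) (x y : V) :
    ‖α • x + (1 - α) • y‖ ^ 2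
      = α * ‖x‖ ^ 2 + (1 - α) * ‖y‖ ^ 2 - α * (1 - α) * ‖x - y‖ ^ 2 := by
  have e : ∀ v : V, ‖v‖ ^ 2 = ⟪v, v⟫ := fun v => (real_inner_self_eq_norm_sq v).symm
  rw [e, e, e, e]
  simp only [inner_add_left, inner_add_right, inner_sub_left, inner_sub_right,
    real_inner_smul_left, real_inner_smul_right]
  rw [real_inner_comm y x]
  ring

lemma norm_sub_smul_sq (v : V) (t : ℝ) (g q : V) :
    ‖v - t • g - q‖ ^ 2 = ‖v - q‖ ^ 2 - 2 * t * ⟪g, v - q⟫ + t ^ 2 * ‖g‖ ^ 2 := by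
  have h : v - t • g - q = (v - q) - t • g := by abel
  rw [h, norm_sub_sq_real, real_inner_smul_right, real_inner_comm, norm_smul]
  simp [Real.norm_eq_abs, mul_pow, sq_abs]
  ring

lemma proj_descent {Z : Set V} {projZ : V → V}
    (hproj : ∀ x, ∀ y ∈ Z, (inner ℝ (x - projZ x) (y - projZ x) : ℝ) ≤ 0)
    (x q : V) (hq : q ∈ Z) :
    ‖projZ x - q‖ ^ 2 ≤ ‖x - q‖ ^ 2 - ‖x - projZ x‖ ^ 2 := by
  have h := hproj x q hq
  have key : ‖x - q‖ ^ 2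
      = ‖x - projZ x‖ ^ 2 + 2 * ⟪x - projZ x, projZ x - q⟫ + ‖projZ x - q‖ ^ 2 := by
    have h2 : x - q = (x - projZ x) + (projZ x - q) := by abel
    rw [h2, norm_add_sq_real]
  have h3 : ⟪x - projZ x, projZ x - q⟫ = -⟪x - projZ x, q - projZ x⟫ := by
    rw [← inner_neg_right]; congr 1; abel
  nlinarith

lemma proj_nonexp {Z : Set V} {projZ : V → V}
    (hprojmem : ∀ x, projZ x ∈ Z)
    (hproj : ∀ x, ∀ y ∈ Z, (inner ℝ (x - projZ x) (y - projZ x) : ℝ) ≤ 0)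
    (x y : V) : ‖projZ x - projZ y‖ ≤ ‖x - y‖ := by
  have h1 : ⟪x - projZ x, projZ y - projZ x⟫ ≤ 0 := hproj x _ (hprojmem y)
  have h2 : ⟪y - projZ y, projZ x - projZ y⟫ ≤ 0 := hproj y _ (hprojmem x)
  have key : ‖projZ x - projZ y‖ ^ 2 ≤ ⟪x - y, projZ x - projZ y⟫ := by
    have expand : ⟪x - y, projZ x - projZ y⟫ - ⟪projZ x - projZ y, projZ x - projZ y⟫
        = ⟪x - projZ x, projZ x - projZ y⟫ - ⟪y - projZ y, projZ x - projZ y⟫ := by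
      rw [← inner_sub_left, ← inner_sub_left]
      congr 1
      abel
    have hx' : 0 ≤ ⟪x - projZ x, projZ x - projZ y⟫ := by
      have hflip : ⟪x - projZ x, projZ x - projZ y⟫
          = -⟪x - projZ x, projZ y - projZ x⟫ := by
        rw [← inner_neg_right, neg_sub]
      linarith
    have hself : ⟪projZ x - projZ y, projZ x - projZ y⟫ = ‖projZ x - projZ y‖ ^ 2 :=
      real_inner_self_eq_norm_sq _
    linarith
  have hcs := real_inner_le_norm (x - y) (projZ x - projZ y)
  rcases eq_or_lt_of_le (norm_nonneg (projZ x - projZ y)) with h0 | h0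
  · rw [← h0]; exact norm_nonneg _
  · nlinarith

lemma sq_integral_le {Ω : Type*} [MeasurableSpace Ω] (P : Measure Ω) [IsProbabilityMeasure P]
    (f : Ω → ℝ) (hf : Integrable f P) (hf2 : Integrable (fun ω => (f ω) ^ 2) P) :
    (∫ ω, f ω ∂P) ^ 2 ≤ ∫ ω, (f ω) ^ 2 ∂P := by
  set c := ∫ ω, f ω ∂P with hc
  have h0 : 0 ≤ ∫ ω, (f ω - c) ^ 2 ∂P := integral_nonneg fun ω => sq_nonneg _
  have e : ∫ ω, (f ω - c) ^ 2 ∂P = (∫ ω, (f ω) ^ 2 ∂P) - 2 * c * c + c ^ 2 := by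
    have hfun : (fun ω => (f ω - c) ^ 2) = fun ω => (f ω) ^ 2 - (2 * c) * f ω + c ^ 2 := by
      funext ω; ring
    have hint : Integrable (fun ω => (f ω) ^ 2 - 2 * c * f ω) P :=
      hf2.sub (hf.const_mul (2 * c))
    rw [hfun, integral_add hint (integrable_const _),
      integral_sub hf2 (hf.const_mul (2 * c)), integral_const_mul, integral_const,
      probReal_univ, smul_eq_mul, one_mul, ← hc]
  nlinarith

end Aux


lemma final_scalar (p α γ c a b q r E D θ ρ M : ℝ)
    (hp0 : 0 < p) (hp1 : p ≤ 1) (hα0 : 0 ≤ α) (hα1 : α < 1) (hγ0 : 0 < γ) (hγ1 : γ < 1)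
    (hc : 0 < c)
    (hM : M = α + (1 - α) / p)
    (hθ : θ = α / M)
    (hρ : ρ = 1 - γ ^ 2 * (1 - α) * ((1 - γ) * α) / ((4 * c * α + 8) * M))
    (ha : 0 ≤ a) (hb : 0 ≤ b) (hq : 0 ≤ q) (hr : 0 ≤ r)
    (hE : E ≤ α * a + (1 - α) * b - (1 - γ) * r
        - (α * (1 - α) - γ ^ 2 * (1 - α) * α ^ 2 / (1 - γ * (1 - α))) * q)
    (hD : D = θ * a + (1 - θ) * b)
    (hD4 : D ≤ (2 + 4 * c * α ^ 2) * q + (4 * c / (γ ^ 2 * (1 - α))) * r) :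
    (p + (1 - p) * θ) * E + (1 - p) * (1 - θ) * b ≤ ρ * D := by
  have hα1' : 0 < 1 - α := by linarith
  have hγ1' : 0 < 1 - γ := by linarith
  have hMpos : 0 < M := by rw [hM]; positivity
  have hG : 0 < 1 - γ * (1 - α) := by nlinarith
  have hden : (0:ℝ) < 4 * c * α + 8 := by positivity
  set κ := γ ^ 2 * (1 - α) * ((1 - γ) * α) / (4 * c * α + 8) with hκdef
  have hκ0 : 0 ≤ κ := by
    rw [hκdef]
    apply div_nonneg _ hden.le
    have h : (0:ℝ) ≤ γ ^ 2 * (1 - α) := by positivity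
    exact mul_nonneg h (mul_nonneg (by linarith) hα0)
  -- Key1
  have Key1 : κ * (4 * c / (γ ^ 2 * (1 - α))) ≤ 1 - γ := by
    have e : κ * (4 * c / (γ ^ 2 * (1 - α))) = 4 * c * α * (1 - γ) / (4 * c * α + 8) := by
      rw [hκdef]
      field_simp
    rw [e, div_le_iff₀ hden]
    nlinarith [mul_nonneg hc.le hα0]
  -- Key2
  have h1 : γ ^ 2 * α ≤ (1 - γ * (1 - α)) * (1 - γ ^ 2 + γ ^ 3) := by
    have u1 : (0:ℝ) ≤ 1 - γ := hγ1'.le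
    have u3 : (0:ℝ) ≤ 1 - γ ^ 2 := by nlinarith [mul_nonneg u1 (by linarith : (0:ℝ) ≤ 1 + γ)]
    have u2 : (0:ℝ) ≤ 1 - γ ^ 2 + γ ^ 3 := by nlinarith [pow_nonneg hγ0.le 3]
    have t1 : (0:ℝ) ≤ (1 - γ) * (1 - γ ^ 2 + γ ^ 3) := mul_nonneg u1 u2
    have t2 : (0:ℝ) ≤ γ * α * ((1 - γ) * (1 - γ ^ 2)) :=
      mul_nonneg (mul_nonneg hγ0.le hα0) (mul_nonneg u1 u3)
    nlinarith [t1, t2]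
  have h2 : γ ^ 2 * (1 - γ) * (1 - γ * (1 - α)) ≤ (1 - γ * (1 - α)) - γ ^ 2 * α := by
    nlinarith [h1]
  have h3 : 2 + 4 * c * α ^ 2 ≤ 8 + 4 * c * α := by
    nlinarith [mul_nonneg hc.le (mul_nonneg hα0 hα1'.le)]
  have hA : (0:ℝ) ≤ γ ^ 2 * (1 - α) * (1 - γ) * α * (1 - γ * (1 - α)) := by
    have : (0:ℝ) ≤ γ ^ 2 * (1 - α) * (1 - γ) * α := by
      apply mul_nonneg _ hα0
      apply mul_nonneg _ hγ1'.le
      positivity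
    exact mul_nonneg this hG.le
  have step1 : γ ^ 2 * (1 - α) * (1 - γ) * α * (1 - γ * (1 - α)) * (2 + 4 * c * α ^ 2)
      ≤ γ ^ 2 * (1 - α) * (1 - γ) * α * (1 - γ * (1 - α)) * (8 + 4 * c * α) :=
    mul_le_mul_of_nonneg_left h3 hA
  have hB : (0:ℝ) ≤ (1 - α) * α * (8 + 4 * c * α) := by
    apply mul_nonneg (mul_nonneg hα1'.le hα0); positivity
  have step2 : (1 - α) * α * (8 + 4 * c * α) * (γ ^ 2 * (1 - γ) * (1 - γ * (1 - α)))
      ≤ (1 - α) * α * (8 + 4 * c * α) * ((1 - γ * (1 - α)) - γ ^ 2 * α) :=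
    mul_le_mul_of_nonneg_left h2 hB
  have hpoly : γ ^ 2 * (1 - α) * ((1 - γ) * α) * (2 + 4 * c * α ^ 2) * (1 - γ * (1 - α))
      ≤ (α * (1 - α) * (1 - γ * (1 - α)) - γ ^ 2 * (1 - α) * α ^ 2) * (4 * c * α + 8) := by
    nlinarith [step1, step2]
  have Key2 : κ * (2 + 4 * c * α ^ 2)
      ≤ α * (1 - α) - γ ^ 2 * (1 - α) * α ^ 2 / (1 - γ * (1 - α)) := by
    rw [hκdef, div_mul_eq_mul_div, div_le_iff₀ hden]
    have e2 : α * (1 - α) - γ ^ 2 * (1 - α) * α ^ 2 / (1 - γ * (1 - α))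
        = (α * (1 - α) * (1 - γ * (1 - α)) - γ ^ 2 * (1 - α) * α ^ 2) / (1 - γ * (1 - α)) := by
      rw [eq_div_iff hG.ne', sub_mul, div_mul_cancel₀ _ hG.ne']
    rw [e2, div_mul_eq_mul_div, le_div_iff₀ hG]
    nlinarith [hpoly]
  -- combine
  have hκD : κ * D ≤ (1 - γ) * r
      + (α * (1 - α) - γ ^ 2 * (1 - α) * α ^ 2 / (1 - γ * (1 - α))) * q := by
    calc κ * D ≤ κ * ((2 + 4 * c * α ^ 2) * q + (4 * c / (γ ^ 2 * (1 - α))) * r) :=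
          mul_le_mul_of_nonneg_left hD4 hκ0
      _ = (κ * (2 + 4 * c * α ^ 2)) * q + (κ * (4 * c / (γ ^ 2 * (1 - α)))) * r := by ring
      _ ≤ _ := by
          have := mul_le_mul_of_nonneg_right Key2 hq
          have := mul_le_mul_of_nonneg_right Key1 hr
          linarith
  have hρκ : ρ = 1 - κ / M := by
    rw [hρ, hκdef]; rw [div_div]
  have hgoal_eq : (p + (1 - p) * θ) * E + (1 - p) * (1 - θ) * b
      = (E + ((1 - p) * (1 - α) / p) * b) / M := by
    rw [hθ, hM]; field_simp; ring
  have hρD_eq : ρ * D = (α * a + ((1 - α) / p) * b - κ * D) / M := by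
    rw [hρκ, hD, hθ, hM]
    field_simp
    ring
  rw [hgoal_eq, hρD_eq]
  have hfin : E + ((1 - p) * (1 - α) / p) * b ≤ α * a + ((1 - α) / p) * b - κ * D := by
    have hbb : ((1 - p) * (1 - α) / p) * b + (1 - α) * b = ((1 - α) / p) * b := by
      field_simp; ring
    linarith [hE, hκD]
  exact div_le_div_of_nonneg_right hfin hMpos.le

/-- one-step linear contraction of loopless SVRG-EG under the
error-bound condition (Theorem 1). -/
theorem stmt_3
    {V : Type*} [NormedAddCommGroup V] [InnerProductSpace ℝ V] [FiniteDimensional ℝ V]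
    (Z : Set V) (hZne : Z.Nonempty) (hZcpt : IsCompact Z) (hZconv : Convex ℝ Z)
    (projZ : V → V)
    (hprojmem : ∀ x, projZ x ∈ Z)
    (hproj : ∀ x, ∀ y ∈ Z, (inner ℝ (x - projZ x) (y - projZ x) : ℝ) ≤ 0)
    (F : V → V) (L : ℝ) (hL : 0 < L)
    (hmono : ∀ z₁ ∈ Z, ∀ z₂ ∈ Z, (0 : ℝ) ≤ inner ℝ (F z₁ - F z₂) (z₁ - z₂))
    (Zstar : Set V)
    (hZstar : Zstar = {zs ∈ Z | ∀ z ∈ Z, (0 : ℝ) ≤ inner ℝ (F zs) (z - zs)})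
    (hZstarNe : Zstar.Nonempty) (hZstarClosed : IsClosed Zstar)
    {Ω : Type*} [MeasurableSpace Ω] (P : Measure Ω) [IsProbabilityMeasure P]
    (Fo : Ω → V → V)
    (hFmeas : ∀ x : V, AEStronglyMeasurable (fun ω => Fo ω x) P)
    (hFint : ∀ x ∈ Z, Integrable (fun ω => Fo ω x) P)
    (hunb : ∀ x ∈ Z, ∫ ω, Fo ω x ∂P = F x)
    (hsqint : ∀ x ∈ Z, ∀ y ∈ Z, Integrable (fun ω => ‖Fo ω x - Fo ω y‖ ^ 2) P)
    (hlipmean : ∀ x ∈ Z, ∀ y ∈ Z,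
      ∫ ω, ‖Fo ω x - Fo ω y‖ ^ 2 ∂P ≤ L ^ 2 * ‖x - y‖ ^ 2)
    (C : ℝ) (hC : 0 < C)
    (heb : ∀ z ∈ Z, ∀ σ : ℝ, 0 < σ →
      infDist z Zstar ≤ (C / σ) * ‖z - projZ (z - σ • F z)‖)
    (p α γ τ θ ρ : ℝ) (hp0 : 0 < p) (hp1 : p ≤ 1)
    (hα0 : 0 ≤ α) (hα1 : α < 1) (hγ0 : 0 < γ) (hγ1 : γ < 1)
    (hτ : τ = γ * Real.sqrt (1 - α) / L)
    (hθ : θ = α / (α + (1 - α) / p))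
    (hρ : ρ = 1 - τ ^ 2 * ((1 - γ) * α * L ^ 2)
        / ((4 * C ^ 2 * α * L ^ 2 + 8) * (α + (1 - α) / p)))
    (z w zbar u : V) (hz : z ∈ Z) (hw : w ∈ Z)
    (hzbar : zbar = α • z + (1 - α) • w)
    (hu : u = projZ (zbar - τ • F w))
    (zp : Ω → V)
    (hzp : ∀ ω, zp ω = projZ (zbar - τ • (F w + Fo ω u - Fo ω w))) :
    ∫ x : Ω × Bool, distTheta Zstar θ (zp x.1) (if x.2 then zp x.1 else w)
        ∂(P.prod ((PMF.bernoulli (Real.toNNReal p)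
            (Real.toNNReal_le_one.mpr hp1)).toMeasure))
      ≤ ρ * distTheta Zstar θ z w := by
  have hα1' : (0:ℝ) < 1 - α := by linarith
  have hτ0 : 0 < τ := by
    rw [hτ]; exact div_pos (mul_pos hγ0 (Real.sqrt_pos.2 hα1')) hL
  have hτL : τ ^ 2 * L ^ 2 = γ ^ 2 * (1 - α) := by
    rw [hτ, div_pow, mul_pow, Real.sq_sqrt hα1'.le]
    field_simp
  have hMpos : 0 < α + (1 - α) / p := by positivity
  have hθ0 : 0 ≤ θ := by rw [hθ]; positivity
  have hθ1 : θ ≤ 1 := by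
    rw [hθ, div_le_one hMpos]
    have : 0 ≤ (1 - α) / p := by positivity
    linarith
  -- solution set facts
  have hZsub : Zstar ⊆ Z := by rw [hZstar]; intro x hx; exact hx.1
  have hZscpt : IsCompact Zstar := hZcpt.of_isClosed_subset hZstarClosed hZsub
  obtain ⟨R, hR⟩ := isBounded_iff_forall_norm_le.1 hZcpt.isBounded
  -- memberships
  have hzbarZ : zbar ∈ Z := by
    rw [hzbar]; exact hZconv hz hw hα0 (by linarith) (by ring)
  have huZ : u ∈ Z := by rw [hu]; exact hprojmem _
  have hzpZ : ∀ ω, zp ω ∈ Z := fun ω => by rw [hzp ω]; exact hprojmem _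
  -- distTheta facts
  have hbdd : ∀ a' b' : V,
      BddBelow ((fun zs => θ * ‖a' - zs‖ ^ 2 + (1 - θ) * ‖b' - zs‖ ^ 2) '' Zstar) := by
    intro a' b'
    refine ⟨0, ?_⟩
    rintro t ⟨v, hv, rfl⟩
    have h1 : (0:ℝ) ≤ 1 - θ := by linarith
    positivity
  have hdistle : ∀ (a' b' v : V), v ∈ Zstar →
      distTheta Zstar θ a' b' ≤ θ * ‖a' - v‖ ^ 2 + (1 - θ) * ‖b' - v‖ ^ 2 := by
    intro a' b' v hv
    exact csInf_le (hbdd a' b') ⟨v, hv, rfl⟩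
  have hdist0 : ∀ a' b' : V, 0 ≤ distTheta Zstar θ a' b' := by
    intro a' b'
    apply Real.sInf_nonneg
    rintro t ⟨v, hv, rfl⟩
    have h1 : (0:ℝ) ≤ 1 - θ := by linarith
    positivity
  have hcont : Continuous fun v : V => θ * ‖z - v‖ ^ 2 + (1 - θ) * ‖w - v‖ ^ 2 := by
    fun_prop
  obtain ⟨zs, hzsmem, hzsmin⟩ := hZscpt.exists_isMinOn hZstarNe hcont.continuousOn
  have hDeq : distTheta Zstar θ z w = θ * ‖z - zs‖ ^ 2 + (1 - θ) * ‖w - zs‖ ^ 2 := by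
    refine le_antisymm (hdistle _ _ _ hzsmem) ?_
    apply le_csInf (hZstarNe.image _)
    rintro t ⟨v, hv, rfl⟩
    exact hzsmin hv
  have hzsZ : zs ∈ Z := hZsub hzsmem
  have hzsVI : ∀ v ∈ Z, (0:ℝ) ≤ ⟪F zs, v - zs⟫ := by
    have h := hzsmem
    rw [hZstar] at h
    exact h.2
  -- F is L-Lipschitz in norm on Z
  have hFlip : ∀ x ∈ Z, ∀ y ∈ Z, ‖F x - F y‖ ≤ L * ‖x - y‖ := by
    intro x hx y hy
    have h1 : F x - F y = ∫ ω, (Fo ω x - Fo ω y) ∂P := by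
      rw [integral_sub (hFint x hx) (hFint y hy), hunb x hx, hunb y hy]
    have h2 : ‖∫ ω, (Fo ω x - Fo ω y) ∂P‖ ≤ ∫ ω, ‖Fo ω x - Fo ω y‖ ∂P :=
      norm_integral_le_integral_norm _
    have hnint : Integrable (fun ω => ‖Fo ω x - Fo ω y‖) P :=
      ((hFint x hx).sub (hFint y hy)).norm
    have h3 : (∫ ω, ‖Fo ω x - Fo ω y‖ ∂P) ^ 2 ≤ ∫ ω, ‖Fo ω x - Fo ω y‖ ^ 2 ∂P :=
      sq_integral_le P _ hnint (hsqint x hx y hy)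
    have h4 := hlipmean x hx y hy
    have h5 : 0 ≤ ∫ ω, ‖Fo ω x - Fo ω y‖ ∂P := integral_nonneg fun ω => norm_nonneg _
    have h6 : ‖F x - F y‖ ≤ ∫ ω, ‖Fo ω x - Fo ω y‖ ∂P := by rw [h1]; exact h2
    have hAB : ‖F x - F y‖ ^ 2 ≤ (L * ‖x - y‖) ^ 2 := by
      nlinarith [norm_nonneg (F x - F y)]
    have hs := Real.sqrt_le_sqrt hAB
    rwa [Real.sqrt_sq (norm_nonneg _), Real.sqrt_sq (mul_nonneg hL.le (norm_nonneg _))] at hs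
  -- pointwise key inequality
  have hkey : ∀ ω, ‖zp ω - zs‖ ^ 2 ≤ (‖zbar - zs‖ ^ 2 - ‖zbar - u‖ ^ 2
      - 2 * τ * ⟪u - zs, F w⟫) + τ ^ 2 * ‖Fo ω u - Fo ω w‖ ^ 2
      - 2 * τ * ⟪u - zs, Fo ω u - Fo ω w⟫ := by
    intro ω
    set g : V := F w + Fo ω u - Fo ω w with hgdef
    have h1 : ‖zp ω - zs‖ ^ 2 ≤ ‖zbar - τ • g - zs‖ ^ 2 - ‖zbar - τ • g - projZ (zbar - τ • g)‖ ^ 2 := by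
      rw [hzp ω]
      exact proj_descent hproj _ _ hzsZ
    rw [← hzp ω] at h1
    rw [norm_sub_smul_sq zbar τ g zs, norm_sub_smul_sq zbar τ g (zp ω)] at h1
    have h2 : ⟪zbar - τ • F w - u, zp ω - u⟫ ≤ 0 := by
      have h := hproj (zbar - τ • F w) (zp ω) (hzpZ ω)
      rwa [← hu] at h
    have h2' : ⟪zbar - u, zp ω - u⟫ - τ * ⟪F w, zp ω - u⟫ ≤ 0 := by
      have he : zbar - τ • F w - u = (zbar - u) - τ • F w := by abel
      rw [he, inner_sub_left, real_inner_smul_left] at h2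
      exact h2
    have h4 : ‖zbar - zp ω‖ ^ 2
        = ‖zbar - u‖ ^ 2 + 2 * ⟪zbar - u, u - zp ω⟫ + ‖u - zp ω‖ ^ 2 := by
      have he : zbar - zp ω = (zbar - u) + (u - zp ω) := by abel
      rw [he, norm_add_sq_real]
    have h5 : ⟪zbar - u, zp ω - u⟫ = -⟪zbar - u, u - zp ω⟫ := by
      rw [← inner_neg_right, neg_sub]
    have h6 : -(2 * τ * ⟪Fo ω u - Fo ω w, zp ω - u⟫)
        ≤ τ ^ 2 * ‖Fo ω u - Fo ω w‖ ^ 2 + ‖u - zp ω‖ ^ 2 := by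
      have hcs : -⟪Fo ω u - Fo ω w, zp ω - u⟫ ≤ ‖Fo ω u - Fo ω w‖ * ‖zp ω - u‖ := by
        have h := real_inner_le_norm (-(Fo ω u - Fo ω w)) (zp ω - u)
        rwa [inner_neg_left, norm_neg] at h
      have hn : ‖zp ω - u‖ = ‖u - zp ω‖ := norm_sub_rev _ _
      rw [hn] at hcs
      nlinarith [sq_nonneg (τ * ‖Fo ω u - Fo ω w‖ - ‖u - zp ω‖),
        mul_le_mul_of_nonneg_left hcs (by linarith : (0:ℝ) ≤ 2 * τ)]
    have h7 : ⟪g, zp ω - zs⟫ = ⟪F w, zp ω - u⟫ + ⟪Fo ω u - Fo ω w, zp ω - u⟫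
        + (⟪u - zs, F w⟫ + ⟪u - zs, Fo ω u - Fo ω w⟫) := by
      have he : zp ω - zs = (zp ω - u) + (u - zs) := by abel
      have hg2 : g = F w + (Fo ω u - Fo ω w) := by rw [hgdef]; abel
      rw [he, inner_add_right, hg2, inner_add_left, inner_add_left,
        real_inner_comm (F w) (u - zs), real_inner_comm (Fo ω u - Fo ω w) (u - zs)]
    have h7' : 2 * τ * ⟪g, zp ω - zs⟫ = 2 * τ * ⟪F w, zp ω - u⟫
        + 2 * τ * ⟪Fo ω u - Fo ω w, zp ω - u⟫
        + 2 * τ * ⟪u - zs, F w⟫ + 2 * τ * ⟪u - zs, Fo ω u - Fo ω w⟫ := by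
      rw [h7]; ring
    have h9 : ⟪g, zbar - zs⟫ - ⟪g, zbar - zp ω⟫ = ⟪g, zp ω - zs⟫ := by
      rw [← inner_sub_right]
      congr 1
      abel
    have h9' : 2 * τ * ⟪g, zbar - zs⟫ - 2 * τ * ⟪g, zbar - zp ω⟫
        = 2 * τ * ⟪g, zp ω - zs⟫ := by rw [← h9]; ring
    linarith [h1, h2', h4, h5, h6, h7', h9']
  -- projection is nonexpansive hence continuous
  have hcontProj : Continuous projZ := by
    have hlip : LipschitzWith 1 projZ := by
      apply LipschitzWith.of_dist_le_mul
      intro x y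
      rw [dist_eq_norm, dist_eq_norm, NNReal.coe_one, one_mul]
      exact proj_nonexp hprojmem hproj x y
    exact hlip.continuous
  have hzpAESM : AEStronglyMeasurable zp P := by
    have h : AEStronglyMeasurable (fun ω => zbar - τ • (F w + Fo ω u - Fo ω w)) P :=
      aestronglyMeasurable_const.sub
        (((aestronglyMeasurable_const.add (hFmeas u)).sub (hFmeas w)).const_smul τ)
    have h2 := hcontProj.comp_aestronglyMeasurable h
    exact h2.congr (ae_of_all _ fun ω => (hzp ω).symm)
  have hnorm_le : ∀ v ∈ Z, ∀ c' : V, ‖v - c'‖ ^ 2 ≤ (R + ‖c'‖) ^ 2 := by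
    intro v hv c'
    have h1 : ‖v - c'‖ ≤ R + ‖c'‖ := by
      have h2 := hR v hv
      have := norm_sub_le v c'
      linarith
    nlinarith [norm_nonneg (v - c')]
  have hsqcont : Continuous fun v : V => ‖v - zs‖ ^ 2 := by fun_prop
  have hIzp : Integrable (fun ω => ‖zp ω - zs‖ ^ 2) P := by
    refine (integrable_const ((R + ‖zs‖) ^ 2)).mono'
      (hsqcont.comp_aestronglyMeasurable hzpAESM) (ae_of_all _ fun ω => ?_)
    rw [Real.norm_eq_abs, abs_of_nonneg (by positivity)]
    exact hnorm_le _ (hzpZ ω) zs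
  have hδint : Integrable (fun ω => Fo ω u - Fo ω w) P := (hFint u huZ).sub (hFint w hw)
  have hδsq : Integrable (fun ω => ‖Fo ω u - Fo ω w‖ ^ 2) P := hsqint u huZ w hw
  have hδinner : Integrable (fun ω => ⟪u - zs, Fo ω u - Fo ω w⟫) P := hδint.const_inner _
  -- expectation bound
  have hEle : ∫ ω, ‖zp ω - zs‖ ^ 2 ∂P
      ≤ ‖zbar - zs‖ ^ 2 - ‖zbar - u‖ ^ 2 + τ ^ 2 * (L ^ 2 * ‖u - w‖ ^ 2) := by
    have hRHSint : Integrable (fun ω => (‖zbar - zs‖ ^ 2 - ‖zbar - u‖ ^ 2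
        - 2 * τ * ⟪u - zs, F w⟫) + τ ^ 2 * ‖Fo ω u - Fo ω w‖ ^ 2
        - 2 * τ * ⟪u - zs, Fo ω u - Fo ω w⟫) P :=
      ((integrable_const _).add (hδsq.const_mul _)).sub (hδinner.const_mul _)
    have h1 := integral_mono hIzp hRHSint hkey
    have h2 : ∫ ω, ((‖zbar - zs‖ ^ 2 - ‖zbar - u‖ ^ 2 - 2 * τ * ⟪u - zs, F w⟫)
        + τ ^ 2 * ‖Fo ω u - Fo ω w‖ ^ 2 - 2 * τ * ⟪u - zs, Fo ω u - Fo ω w⟫) ∂P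
        = (‖zbar - zs‖ ^ 2 - ‖zbar - u‖ ^ 2 - 2 * τ * ⟪u - zs, F w⟫)
        + τ ^ 2 * (∫ ω, ‖Fo ω u - Fo ω w‖ ^ 2 ∂P) - 2 * τ * ⟪u - zs, F u - F w⟫ := by
      have hA : Integrable (fun ω => (‖zbar - zs‖ ^ 2 - ‖zbar - u‖ ^ 2
          - 2 * τ * ⟪u - zs, F w⟫) + τ ^ 2 * ‖Fo ω u - Fo ω w‖ ^ 2) P :=
        (integrable_const _).add (hδsq.const_mul _)
      have hB : Integrable (fun ω => 2 * τ * ⟪u - zs, Fo ω u - Fo ω w⟫) P :=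
        hδinner.const_mul _
      rw [integral_sub hA hB,
        integral_add (integrable_const _) (hδsq.const_mul _), integral_const,
        probReal_univ, smul_eq_mul, one_mul,
        integral_const_mul, integral_const_mul, integral_inner hδint,
        integral_sub (hFint u huZ) (hFint w hw), hunb u huZ, hunb w hw]
    rw [h2] at h1
    have hFu : 0 ≤ ⟪u - zs, F u⟫ := by
      have hm := hmono u huZ zs hzsZ
      have hv := hzsVI u huZ
      have he : ⟪F u, u - zs⟫ = ⟪F u - F zs, u - zs⟫ + ⟪F zs, u - zs⟫ := by
        rw [inner_sub_left]
        ring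
      have hflip : ⟪u - zs, F u⟫ = ⟪F u, u - zs⟫ := real_inner_comm _ _
      linarith
    have hsplit : ⟪u - zs, F u - F w⟫ = ⟪u - zs, F u⟫ - ⟪u - zs, F w⟫ :=
      inner_sub_right _ _ _
    have hlip2 := hlipmean u huZ w hw
    nlinarith [mul_le_mul_of_nonneg_left hlip2 (sq_nonneg τ),
      mul_nonneg (mul_nonneg (by norm_num : (0:ℝ) ≤ 2) hτ0.le) hFu]
  -- geometry identities
  have hzbw : zbar - w = α • (z - w) := by rw [hzbar]; module
  have hnzbw : ‖zbar - w‖ = α * ‖z - w‖ := by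
    rw [hzbw, norm_smul, Real.norm_eq_abs, abs_of_nonneg hα0]
  have hnzz : ‖z - zbar‖ = (1 - α) * ‖z - w‖ := by
    have h : z - zbar = (1 - α) • (z - w) := by rw [hzbar]; module
    rw [h, norm_smul, Real.norm_eq_abs, abs_of_nonneg (by linarith)]
  have hzbid : ‖zbar - zs‖ ^ 2 = α * ‖z - zs‖ ^ 2 + (1 - α) * ‖w - zs‖ ^ 2
      - α * (1 - α) * ‖z - w‖ ^ 2 := by
    have h : zbar - zs = α • (z - zs) + (1 - α) • (w - zs) := by rw [hzbar]; module
    rw [h, comb_sq]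
    have h2 : z - zs - (w - zs) = z - w := by abel
    rw [h2]
  have hS0 : 0 < γ * (1 - α) := mul_pos hγ0 hα1'
  have hS1 : γ * (1 - α) < 1 := by nlinarith
  have hG : 0 < 1 - γ * (1 - α) := by linarith
  have huw : ‖u - w‖ ^ 2 ≤ ‖zbar - u‖ ^ 2 / (γ * (1 - α))
      + (α ^ 2 * ‖z - w‖ ^ 2) / (1 - γ * (1 - α)) := by
    have h : u - w = (u - zbar) + (zbar - w) := by abel
    have hy := young_norm (γ * (1 - α)) hS0 hS1 (u - zbar) (zbar - w)
    rw [← h, norm_sub_rev u zbar, hnzbw] at hy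
    calc ‖u - w‖ ^ 2 ≤ ‖zbar - u‖ ^ 2 / (γ * (1 - α))
          + (α * ‖z - w‖) ^ 2 / (1 - γ * (1 - α)) := hy
      _ = _ := by ring
  -- scalar E bound
  have hEfinal : ∫ ω, ‖zp ω - zs‖ ^ 2 ∂P
      ≤ α * ‖z - zs‖ ^ 2 + (1 - α) * ‖w - zs‖ ^ 2 - (1 - γ) * ‖zbar - u‖ ^ 2
        - (α * (1 - α) - γ ^ 2 * (1 - α) * α ^ 2 / (1 - γ * (1 - α))) * ‖z - w‖ ^ 2 := by
    have ht : τ ^ 2 * (L ^ 2 * ‖u - w‖ ^ 2) = (γ ^ 2 * (1 - α)) * ‖u - w‖ ^ 2 := by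
      rw [← hτL]; ring
    have hmul := mul_le_mul_of_nonneg_left huw (by positivity : (0:ℝ) ≤ γ ^ 2 * (1 - α))
    have hs1 : γ ^ 2 * (1 - α) * (‖zbar - u‖ ^ 2 / (γ * (1 - α)))
        = γ * ‖zbar - u‖ ^ 2 := by
      field_simp
    have hs2 : γ ^ 2 * (1 - α) * ((α ^ 2 * ‖z - w‖ ^ 2) / (1 - γ * (1 - α)))
        = γ ^ 2 * (1 - α) * α ^ 2 / (1 - γ * (1 - α)) * ‖z - w‖ ^ 2 := by
      ring
    rw [hzbid, ht] at hEle
    rw [mul_add, hs1, hs2] at hmul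
    linarith
  -- error bound
  have hprojres : ‖zbar - projZ (zbar - τ • F zbar)‖
      ≤ ‖zbar - u‖ + τ * (L * (α * ‖z - w‖)) := by
    have t1 : ‖zbar - projZ (zbar - τ • F zbar)‖
        ≤ ‖zbar - u‖ + ‖u - projZ (zbar - τ • F zbar)‖ := by
      have he : zbar - projZ (zbar - τ • F zbar)
          = (zbar - u) + (u - projZ (zbar - τ • F zbar)) := by abel
      rw [he]
      exact norm_add_le _ _
    have t2 : ‖u - projZ (zbar - τ • F zbar)‖
        ≤ ‖(zbar - τ • F w) - (zbar - τ • F zbar)‖ := by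
      rw [hu]
      exact proj_nonexp hprojmem hproj _ _
    have t3 : (zbar - τ • F w) - (zbar - τ • F zbar) = τ • (F zbar - F w) := by
      rw [smul_sub]; abel
    have t4 : ‖τ • (F zbar - F w)‖ = τ * ‖F zbar - F w‖ := by
      rw [norm_smul, Real.norm_eq_abs, abs_of_nonneg hτ0.le]
    have t5 : ‖F zbar - F w‖ ≤ L * ‖zbar - w‖ := hFlip zbar hzbarZ w hw
    rw [hnzbw] at t5
    rw [t3, t4] at t2
    have t6 := mul_le_mul_of_nonneg_left t5 hτ0.le
    have t7 : τ * (L * (α * ‖z - w‖)) = τ * (L * (α * ‖z - w‖)) := rfl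
    calc ‖zbar - projZ (zbar - τ • F zbar)‖
        ≤ ‖zbar - u‖ + ‖u - projZ (zbar - τ • F zbar)‖ := t1
      _ ≤ ‖zbar - u‖ + τ * ‖F zbar - F w‖ := by linarith
      _ ≤ ‖zbar - u‖ + τ * (L * (α * ‖z - w‖)) := by
          have := mul_le_mul_of_nonneg_left t5 hτ0.le
          linarith
  have hd : infDist zbar Zstar ≤ (C / τ) * (‖zbar - u‖ + τ * (L * (α * ‖z - w‖))) := by
    have h := heb zbar hzbarZ τ hτ0
    have hC0 : (0:ℝ) ≤ C / τ := by positivity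
    exact h.trans (mul_le_mul_of_nonneg_left hprojres hC0)
  obtain ⟨v, hvmem, hvd⟩ := hZscpt.exists_infDist_eq_dist hZstarNe zbar
  have hd0 : 0 ≤ infDist zbar Zstar := infDist_nonneg
  have hzv : ‖z - v‖ ≤ (1 - α) * ‖z - w‖ + infDist zbar Zstar := by
    have he : z - v = (z - zbar) + (zbar - v) := by abel
    have h1 : ‖z - v‖ ≤ ‖z - zbar‖ + ‖zbar - v‖ := by rw [he]; exact norm_add_le _ _
    have h2 : ‖zbar - v‖ = infDist zbar Zstar := by rw [hvd, dist_eq_norm]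
    rw [hnzz] at h1
    linarith
  have hwv : ‖w - v‖ ≤ α * ‖z - w‖ + infDist zbar Zstar := by
    have he : w - v = -(zbar - w) + (zbar - v) := by abel
    have h1 : ‖w - v‖ ≤ ‖zbar - w‖ + ‖zbar - v‖ := by
      rw [he]
      refine (norm_add_le _ _).trans ?_
      rw [norm_neg]
    have h2 : ‖zbar - v‖ = infDist zbar Zstar := by rw [hvd, dist_eq_norm]
    rw [hnzbw] at h1
    linarith
  have hτ2 : τ ^ 2 = γ ^ 2 * (1 - α) / L ^ 2 := by
    have hL2 : (L:ℝ) ^ 2 ≠ 0 := by positivity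
    field_simp [hL2] at hτL ⊢
    linarith [hτL]
  have hDbound : distTheta Zstar θ z w
      ≤ (2 + 4 * (C ^ 2 * L ^ 2) * α ^ 2) * ‖z - w‖ ^ 2
        + (4 * (C ^ 2 * L ^ 2) / (γ ^ 2 * (1 - α))) * ‖zbar - u‖ ^ 2 := by
    have hDv := hdistle z w v hvmem
    set d := infDist zbar Zstar with hddef
    set s := ‖z - w‖ with hsdef
    have hs0 : 0 ≤ s := norm_nonneg _
    have hz2 : ‖z - v‖ ^ 2 ≤ 2 * s ^ 2 + 2 * d ^ 2 := by
      have hX : ‖z - v‖ ^ 2 ≤ ((1 - α) * s + d) ^ 2 := by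
        nlinarith only [norm_nonneg (z - v), hzv]
      have hcoef : (0:ℝ) ≤ α * (2 - α) * s ^ 2 :=
        mul_nonneg (mul_nonneg hα0 (by linarith)) (sq_nonneg s)
      nlinarith only [hX, sq_nonneg ((1 - α) * s - d), hcoef, hd0, hs0]
    have hw2 : ‖w - v‖ ^ 2 ≤ 2 * s ^ 2 + 2 * d ^ 2 := by
      have hX : ‖w - v‖ ^ 2 ≤ (α * s + d) ^ 2 := by
        nlinarith only [norm_nonneg (w - v), hwv]
      have hcoef : (0:ℝ) ≤ (1 - α) * (1 + α) * s ^ 2 :=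
        mul_nonneg (mul_nonneg hα1'.le (by linarith)) (sq_nonneg s)
      nlinarith only [hX, sq_nonneg (α * s - d), hcoef, hd0, hs0]
    have hDv2 : distTheta Zstar θ z w ≤ 2 * s ^ 2 + 2 * d ^ 2 := by
      have m1 := mul_le_mul_of_nonneg_left hz2 hθ0
      have m2 := mul_le_mul_of_nonneg_left hw2 (by linarith : (0:ℝ) ≤ 1 - θ)
      nlinarith only [hDv, m1, m2]
    -- bound on d^2
    have hX0 : 0 ≤ ‖zbar - u‖ + τ * (L * (α * s)) := by positivity
    have hdsq : d ^ 2 ≤ (C / τ) ^ 2 * (2 * ‖zbar - u‖ ^ 2 + 2 * (τ * L * α * s) ^ 2) := by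
      have h1 : d ^ 2 ≤ ((C / τ) * (‖zbar - u‖ + τ * (L * (α * s)))) ^ 2 := by
        nlinarith only [hd, hd0, mul_nonneg (by positivity : (0:ℝ) ≤ C / τ) hX0]
      have h2 : (‖zbar - u‖ + τ * (L * (α * s))) ^ 2
          ≤ 2 * ‖zbar - u‖ ^ 2 + 2 * (τ * L * α * s) ^ 2 := by
        nlinarith only [sq_nonneg (‖zbar - u‖ - τ * (L * (α * s)))]
      calc d ^ 2 ≤ ((C / τ) * (‖zbar - u‖ + τ * (L * (α * s)))) ^ 2 := h1
        _ = (C / τ) ^ 2 * (‖zbar - u‖ + τ * (L * (α * s))) ^ 2 := by ring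
        _ ≤ (C / τ) ^ 2 * (2 * ‖zbar - u‖ ^ 2 + 2 * (τ * L * α * s) ^ 2) := by
            exact mul_le_mul_of_nonneg_left h2 (by positivity)
    have hC2τ : (C / τ) ^ 2 = C ^ 2 * L ^ 2 / (γ ^ 2 * (1 - α)) := by
      rw [div_pow, hτ2]
      field_simp
    have hterm : (C / τ) ^ 2 * (2 * (τ * L * α * s) ^ 2)
        = 2 * (C ^ 2 * L ^ 2) * α ^ 2 * s ^ 2 := by
      have hτne : τ ≠ 0 := ne_of_gt hτ0
      field_simp
    rw [mul_add, hterm, hC2τ] at hdsq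
    have e3 : 2 * (C ^ 2 * L ^ 2 / (γ ^ 2 * (1 - α)) * (2 * ‖zbar - u‖ ^ 2)
          + 2 * (C ^ 2 * L ^ 2) * α ^ 2 * s ^ 2)
        = 4 * (C ^ 2 * L ^ 2) / (γ ^ 2 * (1 - α)) * ‖zbar - u‖ ^ 2
          + 4 * (C ^ 2 * L ^ 2) * α ^ 2 * s ^ 2 := by
      ring
    linarith only [hdsq, hDv2, e3]
  -- measurable representative of zp
  obtain ⟨su, hsuSM, hsue⟩ : ∃ su : Ω → V, StronglyMeasurable su
      ∧ (fun ω => Fo ω u) =ᵐ[P] su :=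
    ⟨(hFmeas u).mk _, (hFmeas u).stronglyMeasurable_mk, (hFmeas u).ae_eq_mk⟩
  obtain ⟨sw, hswSM, hswe⟩ : ∃ sw : Ω → V, StronglyMeasurable sw
      ∧ (fun ω => Fo ω w) =ᵐ[P] sw :=
    ⟨(hFmeas w).mk _, (hFmeas w).stronglyMeasurable_mk, (hFmeas w).ae_eq_mk⟩
  set zp' : Ω → V := fun ω => projZ (zbar - τ • (F w + su ω - sw ω)) with hzp'def
  have hzp'SM : StronglyMeasurable zp' :=
    hcontProj.comp_stronglyMeasurable (stronglyMeasurable_const.sub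
      (((stronglyMeasurable_const.add hsuSM).sub hswSM).const_smul τ))
  have hzpe : zp =ᵐ[P] zp' := by
    filter_upwards [hsue, hswe] with ω h1 h2
    rw [hzp ω, hzp'def]
    simp only [h1, h2]
  have hzp'Z : ∀ ω, zp' ω ∈ Z := fun ω => hprojmem _
  set ν := (PMF.bernoulli (Real.toNNReal p)
      (Real.toNNReal_le_one.mpr hp1)).toMeasure with hνdef
  have hfstqmp : MeasureTheory.Measure.QuasiMeasurePreserving
      (Prod.fst : Ω × Bool → Ω) (P.prod ν) P :=
    MeasureTheory.Measure.quasiMeasurePreserving_fst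
  have hzppe : (fun x : Ω × Bool => zp x.1) =ᵐ[P.prod ν] fun x => zp' x.1 := by
    have h := hfstqmp.ae_eq_comp hzpe
    exact h
  set g : Ω × Bool → ℝ := fun x => θ * ‖zp x.1 - zs‖ ^ 2
      + (1 - θ) * ‖(if x.2 then zp x.1 else w) - zs‖ ^ 2 with hgdef
  set g' : Ω × Bool → ℝ := fun x => θ * ‖zp' x.1 - zs‖ ^ 2
      + (1 - θ) * ‖(if x.2 then zp' x.1 else w) - zs‖ ^ 2 with hg'def
  have hgg' : g =ᵐ[P.prod ν] g' := by
    filter_upwards [hzppe] with x hx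
    rw [hgdef, hg'def]
    simp only [hx]
  have hg'SM : StronglyMeasurable g' := by
    have h1 : StronglyMeasurable fun x : Ω × Bool => zp' x.1 :=
      hzp'SM.comp_measurable measurable_fst
    have h2 : StronglyMeasurable fun x : Ω × Bool => (if x.2 then zp' x.1 else w) := by
      refine StronglyMeasurable.ite ?_ h1 stronglyMeasurable_const
      exact measurable_snd (measurableSet_singleton true)
    have hΦ : Continuous fun y : V × V =>
        θ * ‖y.1 - zs‖ ^ 2 + (1 - θ) * ‖y.2 - zs‖ ^ 2 := by fun_prop
    exact hΦ.comp_stronglyMeasurable (h1.prodMk h2)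
  have hg'bd : ∀ x : Ω × Bool, ‖g' x‖ ≤ (R + ‖zs‖) ^ 2 := by
    intro x
    have hz1 : ‖zp' x.1 - zs‖ ^ 2 ≤ (R + ‖zs‖) ^ 2 := hnorm_le _ (hzp'Z x.1) zs
    have hz2 : ‖(if x.2 then zp' x.1 else w) - zs‖ ^ 2 ≤ (R + ‖zs‖) ^ 2 := by
      split
      · exact hnorm_le _ (hzp'Z x.1) zs
      · exact hnorm_le _ hw zs
    have h1θ : (0:ℝ) ≤ 1 - θ := by linarith
    have hval : g' x = θ * ‖zp' x.1 - zs‖ ^ 2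
        + (1 - θ) * ‖(if x.2 then zp' x.1 else w) - zs‖ ^ 2 := rfl
    have h0 : (0:ℝ) ≤ θ * ‖zp' x.1 - zs‖ ^ 2
        + (1 - θ) * ‖(if x.2 then zp' x.1 else w) - zs‖ ^ 2 :=
      add_nonneg (mul_nonneg hθ0 (sq_nonneg _)) (mul_nonneg h1θ (sq_nonneg _))
    rw [hval, Real.norm_eq_abs, abs_of_nonneg h0]
    have m1 := mul_le_mul_of_nonneg_left hz1 hθ0
    have m2 := mul_le_mul_of_nonneg_left hz2 h1θ
    linarith only [m1, m2]
  have hg'int : Integrable g' (P.prod ν) :=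
    (integrable_const _).mono' hg'SM.aestronglyMeasurable (ae_of_all _ hg'bd)
  have hgint : Integrable g (P.prod ν) := hg'int.congr hgg'.symm
  have hIzp' : Integrable (fun ω => ‖zp' ω - zs‖ ^ 2) P := by
    refine (integrable_const ((R + ‖zs‖) ^ 2)).mono'
      (hsqcont.comp_stronglyMeasurable hzp'SM).aestronglyMeasurable
      (ae_of_all _ fun ω => ?_)
    rw [Real.norm_eq_abs, abs_of_nonneg (by positivity)]
    exact hnorm_le _ (hzp'Z ω) zs
  have hIzp'E : ∫ ω, ‖zp' ω - zs‖ ^ 2 ∂P = ∫ ω, ‖zp ω - zs‖ ^ 2 ∂P := by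
    refine integral_congr_ae ?_
    filter_upwards [hzpe] with ω h
    rw [h]
  -- compute ∫ g'
  have hIg' : ∫ x, g' x ∂(P.prod ν)
      = (p + (1 - p) * θ) * (∫ ω, ‖zp ω - zs‖ ^ 2 ∂P)
        + (1 - p) * (1 - θ) * ‖w - zs‖ ^ 2 := by
    rw [MeasureTheory.integral_prod _ hg'int]
    have hinner : ∀ ω : Ω, (∫ b, g' (ω, b) ∂ν)
        = (p + (1 - p) * θ) * ‖zp' ω - zs‖ ^ 2 + (1 - p) * (1 - θ) * ‖w - zs‖ ^ 2 := by
      intro ω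
      rw [hνdef, PMF.integral_eq_sum]
      rw [Fintype.sum_bool]
      have hb1 : ((PMF.bernoulli (Real.toNNReal p)
          (Real.toNNReal_le_one.mpr hp1)) true).toReal = p := by
        rw [PMF.bernoulli_apply]
        simp [Real.coe_toNNReal _ hp0.le]
      have hb0 : ((PMF.bernoulli (Real.toNNReal p)
          (Real.toNNReal_le_one.mpr hp1)) false).toReal = 1 - p := by
        rw [PMF.bernoulli_apply]
        simp only [Bool.cond_false, ENNReal.coe_toReal]
        rw [NNReal.coe_sub (Real.toNNReal_le_one.mpr hp1), NNReal.coe_one,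
          Real.coe_toNNReal _ hp0.le]
      rw [hb1, hb0]
      have hgt : g' (ω, true) = θ * ‖zp' ω - zs‖ ^ 2 + (1 - θ) * ‖zp' ω - zs‖ ^ 2 := by
        simp [hg'def]
      have hgf : g' (ω, false) = θ * ‖zp' ω - zs‖ ^ 2 + (1 - θ) * ‖w - zs‖ ^ 2 := by
        simp [hg'def]
      rw [hgt, hgf]
      simp only [smul_eq_mul]
      ring
    rw [integral_congr_ae (ae_of_all _ hinner)]
    rw [integral_add ((hIzp'.const_mul _)) (integrable_const _), integral_const,
      probReal_univ, smul_eq_mul, one_mul, integral_const_mul, hIzp'E]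
  -- final assembly
  have hEq : ∫ x, g x ∂(P.prod ν) = ∫ x, g' x ∂(P.prod ν) := integral_congr_ae hgg'
  have hρ' : ρ = 1 - γ ^ 2 * (1 - α) * ((1 - γ) * α)
      / ((4 * (C ^ 2 * L ^ 2) * α + 8) * (α + (1 - α) / p)) := by
    rw [hρ]
    have e1 : τ ^ 2 * ((1 - γ) * α * L ^ 2) = γ ^ 2 * (1 - α) * ((1 - γ) * α) := by
      linear_combination ((1 - γ) * α) * hτL
    have e2 : (4 * C ^ 2 * α * L ^ 2 + 8) * (α + (1 - α) / p)
        = (4 * (C ^ 2 * L ^ 2) * α + 8) * (α + (1 - α) / p) := by ring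
    rw [e1, e2]
  have hfinal : (p + (1 - p) * θ) * (∫ ω, ‖zp ω - zs‖ ^ 2 ∂P)
      + (1 - p) * (1 - θ) * ‖w - zs‖ ^ 2 ≤ ρ * distTheta Zstar θ z w := by
    refine final_scalar p α γ (C ^ 2 * L ^ 2) (‖z - zs‖ ^ 2) (‖w - zs‖ ^ 2)
      (‖z - w‖ ^ 2) (‖zbar - u‖ ^ 2) (∫ ω, ‖zp ω - zs‖ ^ 2 ∂P)
      (distTheta Zstar θ z w) θ ρ (α + (1 - α) / p) hp0 hp1 hα0 hα1 hγ0 hγ1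
      (by positivity) rfl hθ hρ' (sq_nonneg _) (sq_nonneg _) (sq_nonneg _)
      (sq_nonneg _) hEfinal hDeq hDbound
  by_cases hfint : Integrable
      (fun x : Ω × Bool => distTheta Zstar θ (zp x.1) (if x.2 then zp x.1 else w))
      (P.prod ν)
  · calc ∫ x : Ω × Bool, distTheta Zstar θ (zp x.1) (if x.2 then zp x.1 else w)
          ∂(P.prod ν)
        ≤ ∫ x, g x ∂(P.prod ν) := by
          refine integral_mono hfint hgint fun x => ?_
          rw [hgdef]
          exact hdistle _ _ _ hzsmem
      _ = ∫ x, g' x ∂(P.prod ν) := hEq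
      _ = _ := hIg'
      _ ≤ ρ * distTheta Zstar θ z w := hfinal
  · rw [integral_undef hfint]
    have hρ0 : 0 ≤ ρ := by
      rw [hρ']
      have hM1 : 1 ≤ α + (1 - α) / p := by
        have h2 : 1 - α ≤ (1 - α) / p := by
          rw [le_div_iff₀ hp0]
          nlinarith only [mul_nonneg (by linarith : (0:ℝ) ≤ 1 - α)
            (by linarith : (0:ℝ) ≤ 1 - p)]
        linarith only [h2, hα0, hα1]
      have hden : (8:ℝ) ≤ (4 * (C ^ 2 * L ^ 2) * α + 8) * (α + (1 - α) / p) := by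
        have h1 : (0:ℝ) ≤ 4 * (C ^ 2 * L ^ 2) * α := by positivity
        nlinarith only [h1, hM1, mul_nonneg h1 (by linarith only [hM1] :
          (0:ℝ) ≤ α + (1 - α) / p - 1)]
      have hN0 : 0 ≤ γ ^ 2 * (1 - α) * ((1 - γ) * α) := by
        have h3 : (0:ℝ) ≤ γ ^ 2 * (1 - α) := by positivity
        exact mul_nonneg h3 (mul_nonneg (by linarith) hα0)
      have hN1 : γ ^ 2 * (1 - α) * ((1 - γ) * α) ≤ 1 := by
        have b1 : γ ^ 2 * (1 - α) ≤ 1 := by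
          nlinarith only [hγ0, hγ1, hα0, hα1, sq_nonneg γ,
            mul_nonneg (by linarith : (0:ℝ) ≤ 1 - γ) (by linarith : (0:ℝ) ≤ 1 + γ),
            mul_nonneg (mul_pos hγ0 hγ0).le hα0]
        have b2 : (0:ℝ) ≤ (1 - γ) * α := mul_nonneg (by linarith) hα0
        have b3 : (1 - γ) * α ≤ 1 := by
          nlinarith only [hγ0, hγ1, hα0, hα1, mul_nonneg hγ0.le hα0]
        calc γ ^ 2 * (1 - α) * ((1 - γ) * α) ≤ 1 * ((1 - γ) * α) :=
              mul_le_mul_of_nonneg_right b1 b2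
          _ = (1 - γ) * α := by ring
          _ ≤ 1 := b3
      have hfrac : γ ^ 2 * (1 - α) * ((1 - γ) * α)
          / ((4 * (C ^ 2 * L ^ 2) * α + 8) * (α + (1 - α) / p)) ≤ 1 := by
        rw [div_le_one (by linarith only [hden])]
        linarith only [hN1, hden]
      linarith only [hfrac]
    exact mul_nonneg hρ0 (hdist0 z w)
end

section
/- Suppose there is μ > 0 such that ⟪F(z*), y − Π_{Z*}(y)⟫ ≥ μ·‖y − Π_{Z*}(y)‖ for all y ∈ Z and z* ∈ Z*. Let τ > 0, θ ∈ [0, 1], and 0 < c ≤ τμ/D(Z). Then for all z, w ∈ Z, all u ∈ Z, and all z* ∈ Z*: c·dist^θ_{Z*}(z, w) ≤ 2τ·⟪F(u), u − z*⟫ + 2c·Φ^θ_u(z, w). -/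
open Metric

/-- Lemma 6: weak-sharpness inner-product bound inside the
algorithm's Lyapunov analysis. -/
theorem stmt_6
    {V : Type*} [NormedAddCommGroup V] [InnerProductSpace ℝ V] [FiniteDimensional ℝ V]
    (Z : Set V) (hZne : Z.Nonempty) (hZcpt : IsCompact Z) (hZconv : Convex ℝ Z)
    (F : V → V)
    (hmono : ∀ z₁ ∈ Z, ∀ z₂ ∈ Z, (0 : ℝ) ≤ inner ℝ (F z₁ - F z₂) (z₁ - z₂))
    (Zstar : Set V)
    (hZstar : Zstar = {zs ∈ Z | ∀ z ∈ Z, (0 : ℝ) ≤ inner ℝ (F zs) (z - zs)})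
    (hZstarNe : Zstar.Nonempty) (hZstarClosed : IsClosed Zstar)
    (hZstarConv : Convex ℝ Zstar)
    (projStar : V → V)
    (hprojStarMem : ∀ x, projStar x ∈ Zstar)
    (hprojStar : ∀ x, ∀ y ∈ Zstar, (inner ℝ (x - projStar x) (y - projStar x) : ℝ) ≤ 0)
    (μ : ℝ) (hμ : 0 < μ)
    (hsharp : ∀ y ∈ Z, ∀ zs ∈ Zstar,
      μ * ‖y - projStar y‖ ≤ (inner ℝ (F zs) (y - projStar y) : ℝ))
    (τ θ c : ℝ) (hτ : 0 < τ) (hθ0 : 0 ≤ θ) (hθ1 : θ ≤ 1)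
    (hc0 : 0 < c) (hc : c ≤ τ * μ / diam Z) :
    ∀ z ∈ Z, ∀ w ∈ Z, ∀ u ∈ Z, ∀ zs ∈ Zstar,
      c * distTheta Zstar θ z w
        ≤ 2 * τ * (inner ℝ (F u) (u - zs) : ℝ)
          + 2 * c * (θ * ‖z - u‖ ^ 2 + (1 - θ) * ‖w - u‖ ^ 2) := by
  intro z hz w hw u hu zs hzs
  set p := projStar u with hp
  have hpZstar : p ∈ Zstar := hprojStarMem u
  have hsub : Zstar ⊆ Z := by rw [hZstar]; intro x hx; exact hx.1
  have hpZ : p ∈ Z := hsub hpZstar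
  have hzsZ : zs ∈ Z := hsub hzs
  -- distTheta ≤ value at p
  have hdist : distTheta Zstar θ z w ≤ θ * ‖z - p‖ ^ 2 + (1 - θ) * ‖w - p‖ ^ 2 := by
    apply csInf_le
    · refine ⟨0, ?_⟩
      rintro x ⟨q, hq, rfl⟩
      have h1 : (0:ℝ) ≤ 1 - θ := by linarith
      positivity
    · exact ⟨p, hpZstar, rfl⟩
  -- triangle-type bounds
  have hzp : ‖z - p‖ ^ 2 ≤ 2 * ‖z - u‖ ^ 2 + 2 * ‖u - p‖ ^ 2 := by
    have h := norm_add_le (z - u) (u - p)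
    have h2 : z - p = (z - u) + (u - p) := by abel
    rw [h2]
    nlinarith [sq_nonneg (‖z - u‖ - ‖u - p‖), norm_nonneg ((z-u)+(u-p)), norm_nonneg (z-u), norm_nonneg (u-p)]
  have hwp : ‖w - p‖ ^ 2 ≤ 2 * ‖w - u‖ ^ 2 + 2 * ‖u - p‖ ^ 2 := by
    have h := norm_add_le (w - u) (u - p)
    have h2 : w - p = (w - u) + (u - p) := by abel
    rw [h2]
    nlinarith [sq_nonneg (‖w - u‖ - ‖u - p‖), norm_nonneg ((w-u)+(u-p)), norm_nonneg (w-u), norm_nonneg (u-p)]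
  -- sharpness chain
  have hsharp' : μ * ‖u - p‖ ≤ (inner ℝ (F zs) (u - p) : ℝ) := hsharp u hu zs hzs
  have hzs' : ∀ y ∈ Z, (0:ℝ) ≤ inner ℝ (F zs) (y - zs) := by
    rw [hZstar] at hzs; exact hzs.2
  have hFp : (0:ℝ) ≤ inner ℝ (F zs) (p - zs) := hzs' p hpZ
  have hsum : (inner ℝ (F zs) (u - zs) : ℝ) = inner ℝ (F zs) (u - p) + inner ℝ (F zs) (p - zs) := by
    rw [← inner_add_right]; congr 1; abel
  have hmono' : (inner ℝ (F zs) (u - zs) : ℝ) ≤ inner ℝ (F u) (u - zs) := by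
    have h := hmono u hu zs hzsZ
    rw [inner_sub_left] at h
    linarith
  have hkey : μ * ‖u - p‖ ≤ (inner ℝ (F u) (u - zs) : ℝ) := by
    rw [hsum] at hmono'; linarith
  -- diameter bound
  have hdiam : ‖u - p‖ ≤ diam Z := by
    have := dist_le_diam_of_mem hZcpt.isBounded hu hpZ
    rwa [dist_eq_norm] at this
  have hcD : c * diam Z ≤ τ * μ := by
    rcases eq_or_lt_of_le (diam_nonneg (s := Z)) with hD | hD
    · rw [← hD] at hc
      simp at hc
      linarith
    · exact (le_div_iff₀ hD).mp hc
  have hn : (0:ℝ) ≤ ‖u - p‖ := norm_nonneg _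
  have hbound : c * ‖u - p‖ ^ 2 ≤ τ * (inner ℝ (F u) (u - zs) : ℝ) := by
    nlinarith [mul_le_mul_of_nonneg_left hdiam hc0.le, mul_le_mul_of_nonneg_left hkey hτ.le]
  have h1 : (0:ℝ) ≤ 1 - θ := by linarith
  nlinarith [mul_le_mul_of_nonneg_left hzp (mul_nonneg hc0.le hθ0),
    mul_le_mul_of_nonneg_left hwp (mul_nonneg hc0.le h1),
    mul_le_mul_of_nonneg_left hdist hc0.le]
end

section
/- Let (F_k)_{k≥0} be a filtration on a probability space and (u_k)_{k≥1} a V-valued square-integrable process with u_{k+1} measurable with respect to F_{k+1} and E[u_{k+1} | F_k] = 0 for all k. Then for any K ∈ ℕ, any q ∈ {0, 1, 2, …}, and any compact set C ⊆ V: E[ max_{z∈C} Σ_{k=1}^{K−1} k^q ⟪u_{k+1}, z⟫ ] ≤ (1/2)·K^q·max_{z,z'∈C} ‖z − z'‖² + (1/2)·Σ_{k=0}^{K−1} k^q·E‖u_{k+1}‖². -/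
open MeasureTheory

section StmtEightAux

private lemma telescope_aux (a : ℕ → ℝ) (k : ℕ) :
    ∑ j ∈ Finset.Icc 1 k, (a j - a (j - 1)) = a k - a 0 := by
  induction k with
  | zero => simp
  | succ n ih =>
    rw [Finset.sum_Icc_succ_top (by omega), ih]
    simp only [Nat.add_sub_cancel]
    ring

private lemma abel_sum {a : ℕ → ℝ} (ha0 : a 0 = 0) (N : ℕ) (x : ℕ → ℝ) :
    ∑ k ∈ Finset.Icc 1 N, a k * x k
      = ∑ j ∈ Finset.Icc 1 N, (a j - a (j - 1)) * ∑ k ∈ Finset.Icc j N, x k := by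
  have step1 : ∀ j ∈ Finset.Icc 1 N,
      (a j - a (j - 1)) * ∑ k ∈ Finset.Icc j N, x k
        = ∑ k ∈ Finset.Icc 1 N, (if j ≤ k then (a j - a (j - 1)) * x k else 0) := by
    intro j hj
    have h1 : (1 : ℕ) ≤ j := (Finset.mem_Icc.mp hj).1
    have hfil : Finset.Icc j N = (Finset.Icc 1 N).filter (fun k => j ≤ k) := by
      ext k; simp only [Finset.mem_Icc, Finset.mem_filter]; omega
    rw [Finset.mul_sum, hfil, Finset.sum_filter]
  rw [Finset.sum_congr rfl step1, Finset.sum_comm]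
  refine Finset.sum_congr rfl fun k hk => ?_
  have hk' := Finset.mem_Icc.mp hk
  have hfil : (Finset.Icc 1 N).filter (fun j => j ≤ k) = Finset.Icc 1 k := by
    ext j; simp only [Finset.mem_Icc, Finset.mem_filter]; omega
  refine Eq.symm ?_
  calc ∑ j ∈ Finset.Icc 1 N, (if j ≤ k then (a j - a (j - 1)) * x k else 0)
      = ∑ j ∈ (Finset.Icc 1 N).filter (fun j => j ≤ k), (a j - a (j - 1)) * x k :=
        (Finset.sum_filter _ _).symm
    _ = (∑ j ∈ Finset.Icc 1 k, (a j - a (j - 1))) * x k := by rw [hfil, Finset.sum_mul]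
    _ = a k * x k := by rw [telescope_aux, ha0, sub_zero]

variable {V : Type*} [NormedAddCommGroup V] [InnerProductSpace ℝ V] [FiniteDimensional ℝ V]
  {Ω : Type*} {m0 : MeasurableSpace Ω} {μ : Measure Ω} [IsProbabilityMeasure μ]

set_option linter.unusedSectionVars false

private lemma inner_integrable {f g : Ω → V} (hf : MemLp f 2 μ) (hg : MemLp g 2 μ) :
    Integrable (fun ω => (inner ℝ (f ω) (g ω) : ℝ)) μ := by
  have h := MeasureTheory.L2.integrable_inner (𝕜 := ℝ) (hf.toLp f) (hg.toLp g)
  apply h.congr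
  filter_upwards [hf.coeFn_toLp, hg.coeFn_toLp] with ω h1 h2
  rw [h1, h2]

private lemma cross_zero (ℱ : Filtration ℕ m0) (l : ℕ) {w g : Ω → V}
    (hw : StronglyMeasurable[ℱ l] w) (hwL2 : MemLp w 2 μ) (hg : MemLp g 2 μ)
    (hcond : μ[g|ℱ l] =ᵐ[μ] 0) :
    ∫ ω, (inner ℝ (w ω) (g ω) : ℝ) ∂μ = 0 := by
  have hgint : Integrable g μ := hg.integrable one_le_two
  set b := stdOrthonormalBasis ℝ V with hb
  have hexp : ∀ ω, (inner ℝ (w ω) (g ω) : ℝ)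
      = ∑ i, (inner ℝ (w ω) (b i) : ℝ) * (inner ℝ (b i) (g ω) : ℝ) := fun ω =>
    (b.sum_inner_mul_inner (w ω) (g ω)).symm
  have hterm : ∀ i : Fin (Module.finrank ℝ V),
      Integrable (fun ω => (inner ℝ (w ω) (b i) : ℝ) * (inner ℝ (b i) (g ω) : ℝ)) μ ∧
      ∫ ω, (inner ℝ (w ω) (b i) : ℝ) * (inner ℝ (b i) (g ω) : ℝ) ∂μ = 0 := by
    intro i
    set f : Ω → ℝ := fun ω => (inner ℝ (w ω) (b i) : ℝ) with hfdef
    set gi : Ω → ℝ := fun ω => (inner ℝ (b i) (g ω) : ℝ) with hgidef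
    have hfm : StronglyMeasurable[ℱ l] f := hw.inner stronglyMeasurable_const
    have hfL2 : MemLp f 2 μ := hwL2.inner_const (b i)
    have hgiL2 : MemLp gi 2 μ := hg.const_inner (b i)
    have hgiint : Integrable gi μ := hgiL2.integrable one_le_two
    have hprod : Integrable (f * gi) μ := by
      rw [← memLp_one_iff_integrable]
      have := hgiL2.smul (𝕜 := ℝ) hfL2 (p := 2) (q := 2) (r := 1)
        (hpqr := ⟨by simp [inv_one, ENNReal.inv_two_add_inv_two]⟩)
      exact this
    refine ⟨hprod, ?_⟩
    have hcondgi : μ[gi|ℱ l] =ᵐ[μ] 0 := by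
      refine (ae_eq_condExp_of_forall_setIntegral_eq (ℱ.le l) hgiint ?_ ?_ ?_).symm
      · intro s _ _; exact (integrable_zero _ _ _).integrableOn
      · intro s hs hμs
        have h1 : ∫ x in s, gi x ∂μ = (inner ℝ (b i) (∫ x in s, g x ∂μ) : ℝ) :=
          integral_inner hgint.integrableOn (b i)
        have h2 : ∫ x in s, g x ∂μ = ∫ x in s, (μ[g|ℱ l]) x ∂μ :=
          (setIntegral_condExp (ℱ.le l) hgint hs).symm
        have h3 : ∫ x in s, (μ[g|ℱ l]) x ∂μ = 0 := by
          rw [integral_congr_ae (ae_restrict_of_ae hcond)]; simp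
        simp [h1, h2, h3]
      · exact aestronglyMeasurable_const
    have hzero : μ[f * gi|ℱ l] =ᵐ[μ] 0 := by
      refine (condExp_mul_of_stronglyMeasurable_left hfm hprod hgiint).trans ?_
      filter_upwards [hcondgi] with ω hω
      simp only [Pi.mul_apply, hω, Pi.zero_apply, mul_zero]
    calc ∫ ω, f ω * gi ω ∂μ = ∫ ω, (f * gi) ω ∂μ := rfl
      _ = ∫ ω, (μ[f * gi|ℱ l]) ω ∂μ := (integral_condExp (ℱ.le l)).symm
      _ = 0 := by rw [integral_congr_ae hzero]; simp
  rw [integral_congr_ae (Filter.Eventually.of_forall hexp),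
    integral_finset_sum _ (fun i _ => (hterm i).1)]
  exact Finset.sum_eq_zero fun i _ => (hterm i).2

private lemma normsq_sum (ℱ : Filtration ℕ m0) (u : ℕ → Ω → V)
    (hadapted : ∀ k, StronglyMeasurable[ℱ (k + 1)] (u (k + 1)))
    (hL2 : ∀ k, MemLp (u (k + 1)) 2 μ)
    (hcond : ∀ k, μ[u (k + 1) | ℱ k] =ᵐ[μ] 0) (j : ℕ) :
    ∀ n : ℕ, ∫ ω, ‖∑ k ∈ Finset.Icc j n, u (k + 1) ω‖ ^ 2 ∂μ
      = ∑ k ∈ Finset.Icc j n, ∫ ω, ‖u (k + 1) ω‖ ^ 2 ∂μ := by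
  intro n
  induction n with
  | zero =>
    by_cases hj : j = 0
    · subst hj; simp
    · rw [Finset.Icc_eq_empty (by omega)]; simp
  | succ n ih =>
    by_cases hj : j ≤ n + 1
    · set S : Ω → V := fun ω => ∑ k ∈ Finset.Icc j n, u (k + 1) ω with hSdef
      have hS : MemLp S 2 μ := memLp_finset_sum _ fun k _ => hL2 k
      have hSmeas : StronglyMeasurable[ℱ (n + 1)] S := by
        refine Finset.stronglyMeasurable_fun_sum _ fun k hk => ?_
        exact (hadapted k).mono (ℱ.mono (by simp only [Finset.mem_Icc] at hk; omega))
      have hcrossint : Integrable (fun ω => (inner ℝ (S ω) (u (n + 2) ω) : ℝ)) μ :=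
        inner_integrable hS (hL2 (n + 1))
      have hcross : ∫ ω, (inner ℝ (S ω) (u (n + 2) ω) : ℝ) ∂μ = 0 :=
        cross_zero ℱ (n + 1) hSmeas hS (hL2 (n + 1)) (hcond (n + 1))
      have hpt : ∀ ω, ‖∑ k ∈ Finset.Icc j (n + 1), u (k + 1) ω‖ ^ 2
          = (‖S ω‖ ^ 2 + 2 * (inner ℝ (S ω) (u (n + 2) ω) : ℝ)) + ‖u (n + 2) ω‖ ^ 2 := by
        intro ω
        rw [Finset.sum_Icc_succ_top hj, norm_add_sq_real]
      have hA : Integrable (fun ω => ‖S ω‖ ^ 2) μ := hS.norm.integrable_sq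
      have hB : Integrable (fun ω => 2 * (inner ℝ (S ω) (u (n + 2) ω) : ℝ)) μ :=
        hcrossint.const_mul 2
      have hC : Integrable (fun ω => ‖u (n + 2) ω‖ ^ 2) μ := (hL2 (n + 1)).norm.integrable_sq
      have hAB : Integrable (fun ω => ‖S ω‖ ^ 2 + 2 * (inner ℝ (S ω) (u (n + 2) ω) : ℝ)) μ :=
        hA.add hB
      calc ∫ ω, ‖∑ k ∈ Finset.Icc j (n + 1), u (k + 1) ω‖ ^ 2 ∂μ
          = ∫ ω, (‖S ω‖ ^ 2 + 2 * (inner ℝ (S ω) (u (n + 2) ω) : ℝ)) + ‖u (n + 2) ω‖ ^ 2 ∂μ :=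
            integral_congr_ae (Filter.Eventually.of_forall hpt)
        _ = (∫ ω, ‖S ω‖ ^ 2 ∂μ + ∫ ω, 2 * (inner ℝ (S ω) (u (n + 2) ω) : ℝ) ∂μ)
              + ∫ ω, ‖u (n + 2) ω‖ ^ 2 ∂μ := by
            rw [integral_add hAB hC, integral_add hA hB]
        _ = ∑ k ∈ Finset.Icc j n, ∫ ω, ‖u (k + 1) ω‖ ^ 2 ∂μ + ∫ ω, ‖u (n + 2) ω‖ ^ 2 ∂μ := by
            rw [integral_const_mul, hcross, ih]; ring
        _ = ∑ k ∈ Finset.Icc j (n + 1), ∫ ω, ‖u (k + 1) ω‖ ^ 2 ∂μ := by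
            rw [Finset.sum_Icc_succ_top hj]
    · rw [Finset.Icc_eq_empty (by omega)]; simp

end StmtEightAux

/-- Lemma 4: bound on the expected maximum of a polynomially
weighted sum of martingale-difference inner products over a compact set. -/
theorem stmt_8
    {V : Type*} [NormedAddCommGroup V] [InnerProductSpace ℝ V] [FiniteDimensional ℝ V]
    {Ω : Type*} {m0 : MeasurableSpace Ω} (μ : Measure Ω) [IsProbabilityMeasure μ]
    (ℱ : Filtration ℕ m0)
    (u : ℕ → Ω → V)
    (hadapted : ∀ k, StronglyMeasurable[ℱ (k + 1)] (u (k + 1)))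
    (hL2 : ∀ k, MemLp (u (k + 1)) 2 μ)
    (hcond : ∀ k, μ[u (k + 1) | ℱ k] =ᵐ[μ] 0)
    (K q : ℕ) (C : Set V) (hC : IsCompact C) :
    ∫ ω, sSup ((fun z => ∑ k ∈ Finset.Icc 1 (K - 1),
        (k : ℝ) ^ q * (inner ℝ (u (k + 1) ω) z : ℝ)) '' C) ∂μ
      ≤ (1 / 2) * (K : ℝ) ^ q
          * sSup ((fun zz : V × V => ‖zz.1 - zz.2‖ ^ 2) '' (C ×ˢ C))
        + (1 / 2) * ∑ k ∈ Finset.range K,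
            (k : ℝ) ^ q * ∫ ω, ‖u (k + 1) ω‖ ^ 2 ∂μ := by
  classical
  have he : ∀ k : ℕ, 0 ≤ ∫ ω, ‖u (k + 1) ω‖ ^ 2 ∂μ :=
    fun k => integral_nonneg fun ω => by positivity
  rcases C.eq_empty_or_nonempty with rfl | hCne
  · simp only [Set.image_empty, Real.sSup_empty, Set.empty_prod, integral_zero, mul_zero,
      zero_add]
    have : 0 ≤ ∑ k ∈ Finset.range K, (k : ℝ) ^ q * ∫ ω, ‖u (k + 1) ω‖ ^ 2 ∂μ :=
      Finset.sum_nonneg fun k _ => mul_nonneg (by positivity) (he k)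
    linarith
  obtain ⟨z0, hz0⟩ := hCne
  obtain ⟨R, hRpos, hR⟩ := hC.isBounded.exists_pos_norm_le
  set N := K - 1 with hNdef
  set a : ℕ → ℝ := fun k => if k = 0 then 0 else (k : ℝ) ^ q with hadef
  have ha0 : a 0 = 0 := by simp [hadef]
  have hak : ∀ k, 1 ≤ k → a k = (k : ℝ) ^ q := by
    intro k hk
    simp [hadef, Nat.one_le_iff_ne_zero.mp hk]
  have hd : ∀ j, 1 ≤ j → 0 ≤ a j - a (j - 1) := by
    intro j hj
    rcases eq_or_lt_of_le hj with h1 | h1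
    · rw [← h1]; norm_num [hadef]
    · have hj2 : 2 ≤ j := h1
      rw [hak j hj, hak (j - 1) (by omega), sub_nonneg]
      exact pow_le_pow_left₀ (by positivity) (Nat.cast_le.mpr (Nat.sub_le j 1)) q
  set M : ℕ → Ω → V := fun j ω => ∑ k ∈ Finset.Icc j N, u (k + 1) ω with hMdef
  have hML2 : ∀ j, MemLp (M j) 2 μ := fun j => memLp_finset_sum _ fun k _ => hL2 k
  set D2 := sSup ((fun zz : V × V => ‖zz.1 - zz.2‖ ^ 2) '' (C ×ˢ C)) with hD2def
  have hD2bdd : BddAbove ((fun zz : V × V => ‖zz.1 - zz.2‖ ^ 2) '' (C ×ˢ C)) :=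
    ((hC.prod hC).image ((continuous_fst.sub continuous_snd).norm.pow 2)).bddAbove
  have hD2mem : ∀ z ∈ C, ∀ z' ∈ C, ‖z - z'‖ ^ 2 ≤ D2 := fun z hz z' hz' =>
    le_csSup hD2bdd ⟨(z, z'), Set.mk_mem_prod hz hz', rfl⟩
  have hD2nonneg : 0 ≤ D2 := le_trans (by positivity) (hD2mem z0 hz0 z0 hz0)
  set W : Ω → V := fun ω => ∑ k ∈ Finset.Icc 1 N, ((k : ℝ) ^ q) • u (k + 1) ω with hWdef
  have hWL2 : MemLp W 2 μ := memLp_finset_sum _ fun k _ => (hL2 k).const_smul _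
  have hWeq : ∀ ω z, (∑ k ∈ Finset.Icc 1 N, (k : ℝ) ^ q * (inner ℝ (u (k + 1) ω) z : ℝ))
      = (inner ℝ (W ω) z : ℝ) := by
    intro ω z
    simp only [hWdef]
    rw [sum_inner]
    exact Finset.sum_congr rfl fun k _ => (real_inner_smul_left _ _ _).symm
  set h : V → ℝ := fun w => sSup ((fun z => (inner ℝ w z : ℝ)) '' C) with hhdef
  have himgne : ∀ w : V, ((fun z => (inner ℝ w z : ℝ)) '' C).Nonempty :=
    fun w => ⟨_, ⟨z0, hz0, rfl⟩⟩
  have hbddw : ∀ w : V, BddAbove ((fun z => (inner ℝ w z : ℝ)) '' C) := fun w =>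
    (hC.image (continuous_const.inner continuous_id)).bddAbove
  have hkey : ∀ w w' : V, h w ≤ h w' + R * ‖w - w'‖ := by
    intro w w'
    refine csSup_le (himgne w) ?_
    rintro x ⟨z, hz, rfl⟩
    have h1 : (inner ℝ (w - w') z : ℝ) = (inner ℝ w z : ℝ) - (inner ℝ w' z : ℝ) :=
      inner_sub_left _ _ _
    have h2 : (inner ℝ w' z : ℝ) ≤ h w' := le_csSup (hbddw w') ⟨z, hz, rfl⟩
    have h3 : (inner ℝ (w - w') z : ℝ) ≤ ‖w - w'‖ * ‖z‖ := real_inner_le_norm _ _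
    have h4 : ‖z‖ ≤ R := hR z hz
    have h5 : ‖w - w'‖ * ‖z‖ ≤ ‖w - w'‖ * R :=
      mul_le_mul_of_nonneg_left h4 (norm_nonneg _)
    nlinarith [norm_nonneg (w - w')]
  have habs : ∀ ω, ‖h (W ω)‖ ≤ R * ‖W ω‖ := by
    intro ω
    rw [Real.norm_eq_abs, abs_le]
    constructor
    · have h2 : (inner ℝ (W ω) z0 : ℝ) ≤ h (W ω) := le_csSup (hbddw _) ⟨z0, hz0, rfl⟩
      have h3 : |(inner ℝ (W ω) z0 : ℝ)| ≤ ‖W ω‖ * ‖z0‖ := abs_real_inner_le_norm _ _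
      have h4 : ‖z0‖ ≤ R := hR z0 hz0
      have h5 := abs_le.mp h3
      nlinarith [norm_nonneg (W ω)]
    · refine csSup_le (himgne _) ?_
      rintro x ⟨z, hz, rfl⟩
      have h3 : (inner ℝ (W ω) z : ℝ) ≤ ‖W ω‖ * ‖z‖ := real_inner_le_norm _ _
      nlinarith [norm_nonneg (W ω), hR z hz, norm_nonneg z]
  have hcont : Continuous h := by
    refine (LipschitzWith.of_dist_le_mul (K := Real.toNNReal R) (f := h) ?_).continuous
    intro w w'
    rw [Real.dist_eq, dist_eq_norm, Real.coe_toNNReal _ hRpos.le, abs_le]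
    have e1 := hkey w w'
    have e2 := hkey w' w
    rw [norm_sub_rev] at e2
    constructor <;> linarith
  have hWasm : AEStronglyMeasurable W μ := hWL2.aestronglyMeasurable
  have hfmeas : AEStronglyMeasurable (fun ω => h (W ω)) μ :=
    hcont.comp_aestronglyMeasurable hWasm
  have hfint : Integrable (fun ω => h (W ω)) μ :=
    Integrable.mono' (((hWL2.integrable one_le_two).norm).const_mul R) hfmeas
      (Filter.Eventually.of_forall habs)
  set g : Ω → ℝ := fun ω =>
      (∑ k ∈ Finset.Icc 1 N, (k : ℝ) ^ q * (inner ℝ (u (k + 1) ω) z0 : ℝ))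
      + ∑ j ∈ Finset.Icc 1 N, (a j - a (j - 1)) * (D2 / 2 + ‖M j ω‖ ^ 2 / 2) with hgdef
  have hint1 : ∀ k : ℕ, Integrable (fun ω => (k : ℝ) ^ q * (inner ℝ (u (k + 1) ω) z0 : ℝ)) μ :=
    fun k => (((hL2 k).integrable one_le_two).inner_const z0).const_mul _
  have hint2 : ∀ j, Integrable (fun ω => ‖M j ω‖ ^ 2) μ := fun j => (hML2 j).norm.integrable_sq
  have hint3 : ∀ j, Integrable (fun ω => (a j - a (j - 1)) * (D2 / 2 + ‖M j ω‖ ^ 2 / 2)) μ :=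
    fun j => ((integrable_const (D2 / 2)).add ((hint2 j).div_const 2)).const_mul _
  have hgint : Integrable g μ := by
    apply Integrable.add
    · exact integrable_finset_sum _ fun k _ => hint1 k
    · exact integrable_finset_sum _ fun j _ => hint3 j
  have hle : ∀ ω, h (W ω) ≤ g ω := by
    intro ω
    refine csSup_le (himgne _) ?_
    rintro x ⟨z, hz, rfl⟩
    show (inner ℝ (W ω) z : ℝ) ≤ g ω
    rw [← hWeq ω z]
    have hsplit : (∑ k ∈ Finset.Icc 1 N, (k : ℝ) ^ q * (inner ℝ (u (k + 1) ω) z : ℝ))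
        = (∑ k ∈ Finset.Icc 1 N, (k : ℝ) ^ q * (inner ℝ (u (k + 1) ω) z0 : ℝ))
          + ∑ k ∈ Finset.Icc 1 N, a k * (inner ℝ (u (k + 1) ω) (z - z0) : ℝ) := by
      rw [← Finset.sum_add_distrib]
      refine Finset.sum_congr rfl fun k hk => ?_
      rw [hak k (Finset.mem_Icc.mp hk).1, inner_sub_right]
      ring
    rw [hsplit]
    refine add_le_add le_rfl ?_
    rw [abel_sum ha0 N]
    refine Finset.sum_le_sum fun j hj => ?_
    have hj1 : (1 : ℕ) ≤ j := (Finset.mem_Icc.mp hj).1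
    have hMj : (∑ k ∈ Finset.Icc j N, (inner ℝ (u (k + 1) ω) (z - z0) : ℝ))
        = (inner ℝ (M j ω) (z - z0) : ℝ) := by
      simp only [hMdef]
      rw [sum_inner]
    rw [hMj]
    refine mul_le_mul_of_nonneg_left ?_ (hd j hj1)
    have h1 : (inner ℝ (M j ω) (z - z0) : ℝ) ≤ ‖M j ω‖ * ‖z - z0‖ := real_inner_le_norm _ _
    have h3 : ‖z - z0‖ ^ 2 ≤ D2 := hD2mem z hz z0 hz0
    nlinarith [sq_nonneg (‖M j ω‖ - ‖z - z0‖), norm_nonneg (M j ω), norm_nonneg (z - z0)]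
  have heq1 : ∀ ω, sSup ((fun z => ∑ k ∈ Finset.Icc 1 N,
      (k : ℝ) ^ q * (inner ℝ (u (k + 1) ω) z : ℝ)) '' C) = h (W ω) := by
    intro ω
    have hfun : (fun z => ∑ k ∈ Finset.Icc 1 N, (k : ℝ) ^ q * (inner ℝ (u (k + 1) ω) z : ℝ))
        = fun z => (inner ℝ (W ω) z : ℝ) := funext fun z => hWeq ω z
    rw [hfun]
  have hcrossz0 : ∀ k : ℕ, ∫ ω, (inner ℝ (u (k + 1) ω) z0 : ℝ) ∂μ = 0 := by
    intro k
    have hflip : ∀ ω, (inner ℝ (u (k + 1) ω) z0 : ℝ)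
        = (inner ℝ ((fun _ : Ω => z0) ω) (u (k + 1) ω) : ℝ) := fun ω => real_inner_comm _ _
    rw [integral_congr_ae (Filter.Eventually.of_forall hflip)]
    exact cross_zero ℱ k stronglyMeasurable_const (memLp_const z0) (hL2 k) (hcond k)
  have hEM : ∀ j : ℕ, ∫ ω, ‖M j ω‖ ^ 2 ∂μ
      = ∑ k ∈ Finset.Icc j N, ∫ ω, ‖u (k + 1) ω‖ ^ 2 ∂μ := by
    intro j
    simp only [hMdef]
    exact normsq_sum ℱ u hadapted hL2 hcond j N
  calc ∫ ω, sSup ((fun z => ∑ k ∈ Finset.Icc 1 N,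
        (k : ℝ) ^ q * (inner ℝ (u (k + 1) ω) z : ℝ)) '' C) ∂μ
      = ∫ ω, h (W ω) ∂μ := integral_congr_ae (Filter.Eventually.of_forall heq1)
    _ ≤ ∫ ω, g ω ∂μ := integral_mono hfint hgint hle
    _ = ∑ j ∈ Finset.Icc 1 N, (a j - a (j - 1))
          * (D2 / 2 + (∑ k ∈ Finset.Icc j N, ∫ ω, ‖u (k + 1) ω‖ ^ 2 ∂μ) / 2) := by
        simp only [hgdef]
        rw [integral_add (integrable_finset_sum _ fun k _ => hint1 k)
          (integrable_finset_sum _ fun j _ => hint3 j)]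
        rw [integral_finset_sum _ fun k _ => hint1 k,
          integral_finset_sum _ fun j _ => hint3 j]
        have hz : ∑ k ∈ Finset.Icc 1 N,
            ∫ ω, (k : ℝ) ^ q * (inner ℝ (u (k + 1) ω) z0 : ℝ) ∂μ = 0 := by
          refine Finset.sum_eq_zero fun k _ => ?_
          rw [integral_const_mul, hcrossz0 k, mul_zero]
        rw [hz, zero_add]
        refine Finset.sum_congr rfl fun j _ => ?_
        rw [integral_const_mul, integral_add (integrable_const _) ((hint2 j).div_const 2),
          integral_const, integral_div, hEM j]
        simp [measure_univ]
    _ = a N * (D2 / 2)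
          + (∑ k ∈ Finset.Icc 1 N, a k * ∫ ω, ‖u (k + 1) ω‖ ^ 2 ∂μ) / 2 := by
        rw [abel_sum ha0 N (fun k => ∫ ω, ‖u (k + 1) ω‖ ^ 2 ∂μ), Finset.sum_div]
        have ht := telescope_aux a N
        rw [ha0, sub_zero] at ht
        rw [← ht, Finset.sum_mul, ← Finset.sum_add_distrib]
        refine Finset.sum_congr rfl fun j _ => by ring
    _ ≤ (1 / 2) * (K : ℝ) ^ q * D2
          + (1 / 2) * ∑ k ∈ Finset.range K, (k : ℝ) ^ q * ∫ ω, ‖u (k + 1) ω‖ ^ 2 ∂μ := by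
        have hNK : N = K - 1 := hNdef
        have haN : a N ≤ (K : ℝ) ^ q := by
          by_cases hN0 : N = 0
          · rw [hN0, ha0]; positivity
          · rw [hak N (by omega)]
            exact pow_le_pow_left₀ (by positivity) (Nat.cast_le.mpr (by omega)) q
        have h1 : a N * (D2 / 2) ≤ (1 / 2) * (K : ℝ) ^ q * D2 := by nlinarith
        have h2 : ∑ k ∈ Finset.Icc 1 N, a k * ∫ ω, ‖u (k + 1) ω‖ ^ 2 ∂μ
            ≤ ∑ k ∈ Finset.range K, (k : ℝ) ^ q * ∫ ω, ‖u (k + 1) ω‖ ^ 2 ∂μ := by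
          rw [Finset.sum_congr rfl fun k hk => by
            rw [hak k (Finset.mem_Icc.mp hk).1]]
          refine Finset.sum_le_sum_of_subset_of_nonneg ?_ ?_
          · intro k hk
            rw [Finset.mem_Icc] at hk
            rw [Finset.mem_range]
            omega
          · intro k _ _
            exact mul_nonneg (by positivity) (he k)
        linarith
end

section
/- (One-step linear contraction of deterministic extragradient under error bounds; Tseng.) Assume F is L-Lipschitz on Z and satisfies the error bound dist(z, Z*) ≤ (C̄/σ)·‖z − Π_Z(z − σF(z))‖ for all z ∈ Z and all σ > 0. Let γ ∈ (0, 1) and τ = γ/L. Fix z ∈ Z and set u = Π_Z(z − τF(z)) and z⁺ = Π_Z(z − τF(u)). Then dist(z⁺, Z*)² ≤ (1 − τ²·(1 − γ)³/(2C̄²))·dist(z, Z*)². -/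
open Metric

set_option maxHeartbeats 2000000 in
/-- Tseng: one-step linear contraction of the deterministic
extragradient method under the error-bound condition. -/
theorem stmt_10
    {V : Type*} [NormedAddCommGroup V] [InnerProductSpace ℝ V] [FiniteDimensional ℝ V]
    (Z : Set V) (hZne : Z.Nonempty) (hZcpt : IsCompact Z) (hZconv : Convex ℝ Z)
    (projZ : V → V)
    (hprojmem : ∀ x, projZ x ∈ Z)
    (hproj : ∀ x, ∀ y ∈ Z, (inner ℝ (x - projZ x) (y - projZ x) : ℝ) ≤ 0)
    (F : V → V) (L : ℝ) (hL : 0 < L)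
    (hmono : ∀ z₁ ∈ Z, ∀ z₂ ∈ Z, (0 : ℝ) ≤ inner ℝ (F z₁ - F z₂) (z₁ - z₂))
    (hlip : ∀ z₁ ∈ Z, ∀ z₂ ∈ Z, ‖F z₁ - F z₂‖ ≤ L * ‖z₁ - z₂‖)
    (Zstar : Set V)
    (hZstar : Zstar = {zs ∈ Z | ∀ z ∈ Z, (0 : ℝ) ≤ inner ℝ (F zs) (z - zs)})
    (hZstarNe : Zstar.Nonempty) (hZstarClosed : IsClosed Zstar)
    (C : ℝ) (hC : 0 < C)
    (heb : ∀ z ∈ Z, ∀ σ : ℝ, 0 < σ →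
      infDist z Zstar ≤ (C / σ) * ‖z - projZ (z - σ • F z)‖)
    (γ τ : ℝ) (hγ0 : 0 < γ) (hγ1 : γ < 1) (hτ : τ = γ / L)
    (z u zplus : V) (hz : z ∈ Z)
    (hu : u = projZ (z - τ • F z))
    (hzplus : zplus = projZ (z - τ • F u)) :
    infDist zplus Zstar ^ 2
      ≤ (1 - τ ^ 2 * (1 - γ) ^ 3 / (2 * C ^ 2)) * infDist z Zstar ^ 2 := by
  have hτpos : 0 < τ := by rw [hτ]; positivity
  have huZ : u ∈ Z := hu ▸ hprojmem _
  have hpZ : zplus ∈ Z := hzplus ▸ hprojmem _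
  -- nearest solution to z
  obtain ⟨zs, hzsStar, hdist⟩ := hZstarClosed.exists_infDist_eq_dist hZstarNe z
  have hzsZ : zs ∈ Z := by rw [hZstar] at hzsStar; exact hzsStar.1
  have hVI : ∀ y ∈ Z, (0 : ℝ) ≤ inner ℝ (F zs) (y - zs) := by
    rw [hZstar] at hzsStar; exact hzsStar.2
  set gv : V := τ • F u with hgv
  set fv : V := τ • F z with hfv
  -- projection inequality at zplus
  have h1 : (inner ℝ (z - gv - zplus) (zs - zplus) : ℝ) ≤ 0 := by
    have := hproj (z - τ • F u) zs hzsZ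
    rw [← hzplus] at this
    simpa [hgv, sub_sub] using this
  -- projection inequality at u, tested at zplus
  have h2 : (inner ℝ (z - fv - u) (zplus - u) : ℝ) ≤ 0 := by
    have := hproj (z - τ • F z) zplus hpZ
    rw [← hu] at this
    simpa [hfv, sub_sub] using this
  -- monotonicity + VI : 0 ≤ ⟪gv, u - zs⟫
  have hm : (0 : ℝ) ≤ inner ℝ gv (u - zs) := by
    have hmo := hmono u huZ zs hzsZ
    have hvi := hVI u huZ
    have : (0 : ℝ) ≤ inner ℝ (F u) (u - zs) := by
      have e : (inner ℝ (F u - F zs) (u - zs) : ℝ)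
          = inner ℝ (F u) (u - zs) - inner ℝ (F zs) (u - zs) := inner_sub_left _ _ _
      linarith [e ▸ hmo]
    rw [hgv, real_inner_smul_left]
    positivity
  -- Lipschitz + Cauchy-Schwarz + AM-GM
  have hγτ : τ * L = γ := by rw [hτ]; field_simp
  have hlc : (inner ℝ (gv - fv) (u - zplus) : ℝ)
      ≤ γ / 2 * (‖z - u‖ ^ 2 + ‖u - zplus‖ ^ 2) := by
    have e : gv - fv = τ • (F u - F z) := by rw [hgv, hfv, smul_sub]
    rw [e, real_inner_smul_left]
    have hcs := real_inner_le_norm (F u - F z) (u - zplus)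
    have hl := hlip u huZ z hz
    have hrev : ‖u - z‖ = ‖z - u‖ := norm_sub_rev _ _
    have h4 : (inner ℝ (F u - F z) (u - zplus) : ℝ) ≤ L * ‖z - u‖ * ‖u - zplus‖ := by
      calc (inner ℝ (F u - F z) (u - zplus) : ℝ) ≤ ‖F u - F z‖ * ‖u - zplus‖ := hcs
        _ ≤ L * ‖z - u‖ * ‖u - zplus‖ := by
            rw [← hrev]; exact mul_le_mul_of_nonneg_right hl (norm_nonneg _)
    have h5 : τ * (inner ℝ (F u - F z) (u - zplus) : ℝ) ≤ τ * (L * ‖z - u‖ * ‖u - zplus‖) :=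
      mul_le_mul_of_nonneg_left h4 hτpos.le
    have hamgm : 2 * ‖z - u‖ * ‖u - zplus‖ ≤ ‖z - u‖ ^ 2 + ‖u - zplus‖ ^ 2 := by
      nlinarith [sq_nonneg (‖z - u‖ - ‖u - zplus‖)]
    have hγpos : 0 ≤ γ := hγ0.le
    nlinarith [h5, hamgm, hγτ]
  -- key one-step inequality
  have hY : (0 : ℝ) ≤ (1 - γ) * ‖u - zplus‖ ^ 2 :=
    mul_nonneg (by linarith) (sq_nonneg _)
  have e1 : ‖z - u‖ ^ 2 = ‖z‖ ^ 2 - 2 * inner ℝ z u + ‖u‖ ^ 2 := norm_sub_sq_real z u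
  have e2 : ‖u - zplus‖ ^ 2 = ‖u‖ ^ 2 - 2 * inner ℝ u zplus + ‖zplus‖ ^ 2 :=
    norm_sub_sq_real u zplus
  have e3 : ‖z - zs‖ ^ 2 = ‖z‖ ^ 2 - 2 * inner ℝ z zs + ‖zs‖ ^ 2 := norm_sub_sq_real z zs
  have e4 : ‖zplus - zs‖ ^ 2 = ‖zplus‖ ^ 2 - 2 * inner ℝ zplus zs + ‖zs‖ ^ 2 :=
    norm_sub_sq_real zplus zs
  have h1' := h1
  have h2' := h2
  have hm' := hm
  simp only [inner_sub_left, inner_sub_right, real_inner_self_eq_norm_sq] at h1' h2' hm' hlc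
  have hmain : ‖zplus - zs‖ ^ 2 ≤ ‖z - zs‖ ^ 2 - (1 - γ) * ‖z - u‖ ^ 2 := by
    linarith [h1', h2', hm', hlc, hY, e1, e2, e3, e4,
      real_inner_comm z u, real_inner_comm z zplus, real_inner_comm z zs,
      real_inner_comm u zplus, real_inner_comm u zs, real_inner_comm zplus zs,
      real_inner_comm gv z, real_inner_comm gv u, real_inner_comm gv zplus,
      real_inner_comm gv zs, real_inner_comm fv z, real_inner_comm fv u,
      real_inner_comm fv zplus, real_inner_comm fv zs]
  -- error bound
  have heb' := heb z hz τ hτpos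
  rw [← hu] at heb'
  have hd0 : 0 ≤ infDist z Zstar := infDist_nonneg
  have hB2 : τ ^ 2 / C ^ 2 * infDist z Zstar ^ 2 ≤ ‖z - u‖ ^ 2 := by
    have hstep : τ / C * infDist z Zstar ≤ ‖z - u‖ := by
      have h := mul_le_mul_of_nonneg_left heb' (le_of_lt (by positivity : (0:ℝ) < τ / C))
      have he : τ / C * (C / τ * ‖z - u‖) = ‖z - u‖ := by field_simp
      linarith [he ▸ h]
    have hnn : 0 ≤ τ / C * infDist z Zstar := by positivity
    have := pow_le_pow_left₀ hnn hstep 2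
    calc τ ^ 2 / C ^ 2 * infDist z Zstar ^ 2 = (τ / C * infDist z Zstar) ^ 2 := by ring
      _ ≤ ‖z - u‖ ^ 2 := this
  -- conclusion
  have hfin : infDist zplus Zstar ≤ ‖zplus - zs‖ := by
    have := infDist_le_dist_of_mem (x := zplus) hzsStar
    rwa [dist_eq_norm] at this
  have hfin2 : infDist zplus Zstar ^ 2 ≤ ‖zplus - zs‖ ^ 2 :=
    pow_le_pow_left₀ infDist_nonneg hfin 2
  have hzd : ‖z - zs‖ ^ 2 = infDist z Zstar ^ 2 := by
    rw [hdist, dist_eq_norm]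
  have hcoef : (1 - γ) * (τ ^ 2 / C ^ 2 * infDist z Zstar ^ 2)
      ≥ τ ^ 2 * (1 - γ) ^ 3 / (2 * C ^ 2) * infDist z Zstar ^ 2 := by
    have hk : (0 : ℝ) < τ ^ 2 / C ^ 2 := by positivity
    have h1γ : (0 : ℝ) < 1 - γ := by linarith
    have hd2 : 0 ≤ infDist z Zstar ^ 2 := sq_nonneg _
    have hrw : τ ^ 2 * (1 - γ) ^ 3 / (2 * C ^ 2)
        = τ ^ 2 / C ^ 2 * ((1 - γ) ^ 3 / 2) := by field_simp
    rw [hrw]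
    have hcc : (1 - γ) ^ 3 / 2 ≤ (1 - γ) := by nlinarith [sq_nonneg (1 - γ)]
    nlinarith [mul_nonneg hk.le hd2, mul_le_mul_of_nonneg_right hcc hk.le]
  have hmono2 : (1 - γ) * (τ ^ 2 / C ^ 2 * infDist z Zstar ^ 2)
      ≤ (1 - γ) * ‖z - u‖ ^ 2 :=
    mul_le_mul_of_nonneg_left hB2 (by linarith)
  calc infDist zplus Zstar ^ 2 ≤ ‖zplus - zs‖ ^ 2 := hfin2
    _ ≤ ‖z - zs‖ ^ 2 - (1 - γ) * ‖z - u‖ ^ 2 := hmain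
    _ = infDist z Zstar ^ 2 - (1 - γ) * ‖z - u‖ ^ 2 := by rw [hzd]
    _ ≤ (1 - τ ^ 2 * (1 - γ) ^ 3 / (2 * C ^ 2)) * infDist z Zstar ^ 2 := by
        nlinarith [hmono2, hcoef]
end

section
/- (One-step decrease inequality for deterministic extragradient.) Assume F is L-Lipschitz on Z. Let τ > 0, fix z ∈ Z, and set u = Π_Z(z − τF(z)) and z⁺ = Π_Z(z − τF(u)). Then for every z* ∈ Z*: ‖z⁺ − z*‖² ≤ ‖z − z*‖² − ‖z − u‖² − ‖u − z⁺‖² + 2τL·‖u − z‖·‖u − z⁺‖. -/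
open Metric

/-- one-step decrease inequality for deterministic extragradient. -/
theorem stmt_11
    {V : Type*} [NormedAddCommGroup V] [InnerProductSpace ℝ V] [FiniteDimensional ℝ V]
    (Z : Set V) (hZne : Z.Nonempty) (hZcpt : IsCompact Z) (hZconv : Convex ℝ Z)
    (projZ : V → V)
    (hprojmem : ∀ x, projZ x ∈ Z)
    (hproj : ∀ x, ∀ y ∈ Z, (inner ℝ (x - projZ x) (y - projZ x) : ℝ) ≤ 0)
    (F : V → V) (L : ℝ)
    (hmono : ∀ z₁ ∈ Z, ∀ z₂ ∈ Z, (0 : ℝ) ≤ inner ℝ (F z₁ - F z₂) (z₁ - z₂))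
    (hlip : ∀ z₁ ∈ Z, ∀ z₂ ∈ Z, ‖F z₁ - F z₂‖ ≤ L * ‖z₁ - z₂‖)
    (Zstar : Set V)
    (hZstar : Zstar = {zs ∈ Z | ∀ z ∈ Z, (0 : ℝ) ≤ inner ℝ (F zs) (z - zs)})
    (hZstarNe : Zstar.Nonempty)
    (τ : ℝ) (hτ : 0 < τ)
    (z u zplus : V) (hz : z ∈ Z)
    (hu : u = projZ (z - τ • F z))
    (hzplus : zplus = projZ (z - τ • F u)) :
    ∀ zs ∈ Zstar,
      ‖zplus - zs‖ ^ 2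
        ≤ ‖z - zs‖ ^ 2 - ‖z - u‖ ^ 2 - ‖u - zplus‖ ^ 2
          + 2 * τ * L * ‖u - z‖ * ‖u - zplus‖ := by
  intro zs hzs
  rw [hZstar] at hzs
  obtain ⟨hzsZ, hzsVI⟩ := hzs
  have huZ : u ∈ Z := hu ▸ hprojmem _
  have hpZ : zplus ∈ Z := hzplus ▸ hprojmem _
  have A : (inner ℝ ((z - τ • F z) - u) (zplus - u) : ℝ) ≤ 0 := by
    rw [hu]; exact hproj _ zplus hpZ
  have B : (inner ℝ ((z - τ • F u) - zplus) (zs - zplus) : ℝ) ≤ 0 := by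
    rw [hzplus]; exact hproj _ zs hzsZ
  have C : (0:ℝ) ≤ inner ℝ (F zs) (u - zs) := hzsVI u huZ
  have D : (0:ℝ) ≤ inner ℝ (F u - F zs) (u - zs) := hmono u huZ zs hzsZ
  have E : (inner ℝ (F u - F z) (u - zplus) : ℝ) ≤ L * ‖u - z‖ * ‖u - zplus‖ := by
    calc (inner ℝ (F u - F z) (u - zplus) : ℝ) ≤ ‖F u - F z‖ * ‖u - zplus‖ :=
          real_inner_le_norm _ _
      _ ≤ L * ‖u - z‖ * ‖u - zplus‖ :=
          mul_le_mul_of_nonneg_right (hlip u huZ z hz) (norm_nonneg _)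
  -- key identity
  have key : ‖zplus - zs‖ ^ 2 - ‖z - zs‖ ^ 2 + ‖z - u‖ ^ 2 + ‖u - zplus‖ ^ 2
      = 2 * (inner ℝ (zplus - (z - τ • F u)) (zplus - zs) : ℝ)
        + 2 * (inner ℝ (u - (z - τ • F z)) (u - zplus) : ℝ)
        + 2 * τ * (inner ℝ (F u) (zs - u) : ℝ)
        + 2 * τ * (inner ℝ (F u - F z) (u - zplus) : ℝ) := by
    simp only [← real_inner_self_eq_norm_sq, inner_sub_left, inner_sub_right,
      real_inner_smul_left, real_inner_smul_right]
    linarith [real_inner_comm z zs, real_inner_comm z u, real_inner_comm z zplus,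
      real_inner_comm zs u, real_inner_comm zs zplus, real_inner_comm u zplus,
      real_inner_comm (F u) z, real_inner_comm (F u) zs, real_inner_comm (F u) u,
      real_inner_comm (F u) zplus, real_inner_comm (F z) z, real_inner_comm (F z) u,
      real_inner_comm (F z) zplus]
  have hAB : (inner ℝ (zplus - (z - τ • F u)) (zplus - zs) : ℝ) ≤ 0 := by
    rw [show zplus - (z - τ • F u) = -((z - τ • F u) - zplus) by abel,
      show zplus - zs = -(zs - zplus) by abel, inner_neg_neg]
    exact B
  have hA' : (inner ℝ (u - (z - τ • F z)) (u - zplus) : ℝ) ≤ 0 := by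
    rw [show u - (z - τ • F z) = -((z - τ • F z) - u) by abel,
      show u - zplus = -(zplus - u) by abel, inner_neg_neg]
    exact A
  have hC' : (inner ℝ (F u) (zs - u) : ℝ) ≤ 0 := by
    have : (inner ℝ (F u) (zs - u) : ℝ) = -(inner ℝ (F u - F zs) (u - zs) + inner ℝ (F zs) (u - zs)) := by
      simp only [inner_sub_left, inner_sub_right]; ring
    rw [this]; linarith
  nlinarith [mul_le_mul_of_nonneg_left E (by positivity : (0:ℝ) ≤ 2 * τ),
    mul_le_mul_of_nonneg_left hC' (by positivity : (0:ℝ) ≤ 2 * τ),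
    key, hAB, hA']
end

section
/- Assume F is L-Lipschitz on Z and 0 < τL < 1. Fix z ∈ Z and set u = Π_Z(z − τF(z)) and z⁺ = Π_Z(z − τF(u)). Then ‖z − z⁺‖ ≥ (1 − τL)·‖z − u‖. -/
open Metric

/-- lower bound on the displacement of one extragradient step. -/
theorem stmt_12
    {V : Type*} [NormedAddCommGroup V] [InnerProductSpace ℝ V] [FiniteDimensional ℝ V]
    (Z : Set V) (hZne : Z.Nonempty) (hZcpt : IsCompact Z) (hZconv : Convex ℝ Z)
    (projZ : V → V)
    (hprojmem : ∀ x, projZ x ∈ Z)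
    (hproj : ∀ x, ∀ y ∈ Z, (inner ℝ (x - projZ x) (y - projZ x) : ℝ) ≤ 0)
    (F : V → V) (L : ℝ)
    (hlip : ∀ z₁ ∈ Z, ∀ z₂ ∈ Z, ‖F z₁ - F z₂‖ ≤ L * ‖z₁ - z₂‖)
    (τ : ℝ) (hτ0 : 0 < τ * L) (hτ1 : τ * L < 1)
    (z u zplus : V) (hz : z ∈ Z)
    (hu : u = projZ (z - τ • F z))
    (hzplus : zplus = projZ (z - τ • F u)) :
    (1 - τ * L) * ‖z - u‖ ≤ ‖z - zplus‖ := by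
  -- nonexpansiveness of projZ
  have nonexp : ∀ a b : V, ‖projZ a - projZ b‖ ≤ ‖a - b‖ := by
    intro a b
    have h1 := hproj a (projZ b) (hprojmem b)
    have h2 := hproj b (projZ a) (hprojmem a)
    have key : ‖projZ a - projZ b‖ ^ 2 ≤ inner ℝ (a - b) (projZ a - projZ b) := by
      have e : (inner ℝ (a - b) (projZ a - projZ b) : ℝ)
          = -(inner ℝ (a - projZ a) (projZ b - projZ a) : ℝ)
            - (inner ℝ (b - projZ b) (projZ a - projZ b) : ℝ)
            + ‖projZ a - projZ b‖ ^ 2 := by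
        rw [← real_inner_self_eq_norm_sq]
        simp only [inner_sub_left, inner_sub_right]
        ring
      rw [e]; linarith
    have hle : (inner ℝ (a - b) (projZ a - projZ b) : ℝ) ≤ ‖a - b‖ * ‖projZ a - projZ b‖ :=
      real_inner_le_norm _ _
    rcases eq_or_lt_of_le (norm_nonneg (projZ a - projZ b)) with h0 | h0
    · rw [← h0]; exact norm_nonneg _
    · nlinarith
  have huZ : u ∈ Z := hu ▸ hprojmem _
  by_cases hzu : z = u
  · simp [hzu]
  have hzu' : 0 < ‖z - u‖ := by
    rw [norm_pos_iff, sub_ne_zero]; exact hzu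
  have hL : 0 < L := by
    have hF := hlip z hz u huZ
    have := norm_nonneg (F z - F u)
    rcases lt_trichotomy L 0 with h | h | h
    · nlinarith
    · rw [h] at hτ0; simp at hτ0
    · exact h
  have hτpos : 0 < τ := by nlinarith
  have h1 : ‖zplus - u‖ ≤ τ * L * ‖z - u‖ := by
    have := nonexp (z - τ • F u) (z - τ • F z)
    rw [← hzplus, ← hu] at this
    have e : (z - τ • F u) - (z - τ • F z) = τ • (F z - F u) := by
      rw [smul_sub]; abel
    rw [e, norm_smul] at this
    have hF : ‖F z - F u‖ ≤ L * ‖z - u‖ := hlip z hz u huZ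
    calc ‖zplus - u‖ ≤ ‖τ‖ * ‖F z - F u‖ := this
      _ = τ * ‖F z - F u‖ := by rw [Real.norm_eq_abs, abs_of_pos hτpos]
      _ ≤ τ * (L * ‖z - u‖) := by exact mul_le_mul_of_nonneg_left hF hτpos.le
      _ = τ * L * ‖z - u‖ := by ring
  have h2 : ‖z - u‖ ≤ ‖z - zplus‖ + ‖zplus - u‖ := by
    calc ‖z - u‖ = ‖(z - zplus) + (zplus - u)‖ := by abel_nf
      _ ≤ _ := norm_add_le _ _
  nlinarith
end

section
/- Assume F is L-Lipschitz and monotone on Z, γ ∈ (0, 1), and τ = γ/L. Fix z ∈ Z and set u = Π_Z(z − τF(z)) and z⁺ = Π_Z(z − τF(u)). Then dist(z⁺, Z*)² ≤ dist(z, Z*)² − ((1 − γ)/2)·‖z − z⁺‖². -/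
open Metric

/-- one-step distance decrease for deterministic extragradient
with stepsize `τ = γ/L`. -/
theorem stmt_13
    {V : Type*} [NormedAddCommGroup V] [InnerProductSpace ℝ V] [FiniteDimensional ℝ V]
    (Z : Set V) (hZne : Z.Nonempty) (hZcpt : IsCompact Z) (hZconv : Convex ℝ Z)
    (projZ : V → V)
    (hprojmem : ∀ x, projZ x ∈ Z)
    (hproj : ∀ x, ∀ y ∈ Z, (inner ℝ (x - projZ x) (y - projZ x) : ℝ) ≤ 0)
    (F : V → V) (L : ℝ) (hL : 0 < L)
    (hmono : ∀ z₁ ∈ Z, ∀ z₂ ∈ Z, (0 : ℝ) ≤ inner ℝ (F z₁ - F z₂) (z₁ - z₂))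
    (hlip : ∀ z₁ ∈ Z, ∀ z₂ ∈ Z, ‖F z₁ - F z₂‖ ≤ L * ‖z₁ - z₂‖)
    (Zstar : Set V)
    (hZstar : Zstar = {zs ∈ Z | ∀ z ∈ Z, (0 : ℝ) ≤ inner ℝ (F zs) (z - zs)})
    (hZstarNe : Zstar.Nonempty) (hZstarClosed : IsClosed Zstar)
    (γ τ : ℝ) (hγ0 : 0 < γ) (hγ1 : γ < 1) (hτ : τ = γ / L)
    (z u zplus : V) (hz : z ∈ Z)
    (hu : u = projZ (z - τ • F z))
    (hzplus : zplus = projZ (z - τ • F u)) :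
    infDist zplus Zstar ^ 2
      ≤ infDist z Zstar ^ 2 - ((1 - γ) / 2) * ‖z - zplus‖ ^ 2 := by
  have huZ : u ∈ Z := hu ▸ hprojmem _
  have hzpZ : zplus ∈ Z := hzplus ▸ hprojmem _
  have hsub : Zstar ⊆ Z := by rw [hZstar]; exact fun x hx => hx.1
  have hcpt : IsCompact Zstar := hZcpt.of_isClosed_subset hZstarClosed hsub
  obtain ⟨w, hwZ, hwd⟩ := hcpt.exists_infDist_eq_dist hZstarNe z
  have hwZ' : w ∈ Z := hsub hwZ
  have hτ0 : 0 ≤ τ := by rw [hτ]; positivity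
  have hτL : τ * L = γ := by rw [hτ]; field_simp
  -- projection inequality for zplus
  have h1 : (inner ℝ (z - zplus) (w - zplus) : ℝ) ≤ τ * inner ℝ (F u) (w - zplus) := by
    have := hproj (z - τ • F u) w hwZ'
    rw [← hzplus] at this
    have e : z - τ • F u - zplus = (z - zplus) - τ • F u := by abel
    rw [e, inner_sub_left, real_inner_smul_left] at this
    linarith
  -- projection inequality for u
  have h2 : (inner ℝ (z - u) (zplus - u) : ℝ) ≤ τ * inner ℝ (F z) (zplus - u) := by
    have := hproj (z - τ • F z) zplus hzpZ
    rw [← hu] at this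
    have e : z - τ • F z - u = (z - u) - τ • F z := by abel
    rw [e, inner_sub_left, real_inner_smul_left] at this
    linarith
  -- w is a solution, u feasible + monotonicity
  have h3 : (inner ℝ (F u) (w - u) : ℝ) ≤ 0 := by
    have hw' : ∀ y ∈ Z, (0:ℝ) ≤ inner ℝ (F w) (y - w) := by
      have := hZstar ▸ hwZ; exact this.2
    have hA := hw' u huZ
    have hB := hmono u huZ w hwZ'
    have e : (inner ℝ (F u - F w) (u - w) : ℝ)
        = inner ℝ (F u) (w - u) * (-1) + inner ℝ (F w) (u - w) * (-1) := by
      rw [inner_sub_left]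
      rw [show w - u = -(u - w) by abel, inner_neg_right]
      ring
    rw [e] at hB
    rw [show u - w = -(w - w) + (u - w) by abel] at hA
    have hA' : (0:ℝ) ≤ inner ℝ (F w) (u - w) := by
      have := hw' u huZ
      rwa [show (u - w) = (u - w) from rfl] at this
    nlinarith [hA']
  have h6 : (inner ℝ (F u - F z) (u - zplus) : ℝ) ≤ L * ‖z - u‖ * ‖u - zplus‖ := by
    calc (inner ℝ (F u - F z) (u - zplus) : ℝ) ≤ ‖F u - F z‖ * ‖u - zplus‖ :=
          real_inner_le_norm _ _
      _ ≤ (L * ‖u - z‖) * ‖u - zplus‖ := by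
          have := hlip u huZ z hz
          have : ‖F u - F z‖ * ‖u - zplus‖ ≤ (L * ‖u - z‖) * ‖u - zplus‖ :=
            mul_le_mul_of_nonneg_right this (norm_nonneg _)
          linarith
      _ = L * ‖z - u‖ * ‖u - zplus‖ := by rw [norm_sub_rev u z]
  -- norm expansions
  have hA : ‖z - w‖^2 = ‖z - zplus‖^2 - 2 * inner ℝ (z - zplus) (w - zplus) + ‖w - zplus‖^2 := by
    have := norm_sub_sq_real (z - zplus) (w - zplus)
    rw [show (z - zplus) - (w - zplus) = z - w by abel] at this
    linarith
  have hB : ‖z - zplus‖^2 = ‖z - u‖^2 + 2 * inner ℝ (z - u) (u - zplus) + ‖u - zplus‖^2 := by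
    have := norm_add_sq_real (z - u) (u - zplus)
    rw [show (z - u) + (u - zplus) = z - zplus by abel] at this
    linarith
  -- splits
  have hs1 : (inner ℝ (F u) (w - zplus) : ℝ) = inner ℝ (F u) (w - u) + inner ℝ (F u) (u - zplus) := by
    rw [← inner_add_right]; congr 1; abel
  have hs2 : (inner ℝ (F u) (u - zplus) : ℝ)
      = inner ℝ (F u - F z) (u - zplus) + inner ℝ (F z) (u - zplus) := by
    rw [inner_sub_left]; ring
  have hs3 : (inner ℝ (F z) (zplus - u) : ℝ) = - inner ℝ (F z) (u - zplus) := by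
    rw [show zplus - u = -(u - zplus) by abel, inner_neg_right]
  have hs4 : (inner ℝ (z - u) (zplus - u) : ℝ) = - inner ℝ (z - u) (u - zplus) := by
    rw [show zplus - u = -(u - zplus) by abel, inner_neg_right]
  -- key inequality
  have hsq : 2 * (‖z - u‖ * ‖u - zplus‖) ≤ ‖z - u‖^2 + ‖u - zplus‖^2 := by
    nlinarith [sq_nonneg (‖z - u‖ - ‖u - zplus‖)]
  have key : ‖zplus - w‖^2 ≤ ‖z - w‖^2 - (1 - γ) * (‖z - u‖^2 + ‖u - zplus‖^2) := by
    have e : ‖zplus - w‖^2 = ‖w - zplus‖^2 := by rw [norm_sub_rev]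
    rw [e]
    rw [hs3, hs4] at h2
    have hmul6 : τ * (inner ℝ (F u - F z) (u - zplus) : ℝ) ≤ τ * (L * ‖z - u‖ * ‖u - zplus‖) :=
      mul_le_mul_of_nonneg_left h6 hτ0
    have hmul3 : τ * (inner ℝ (F u) (w - u) : ℝ) ≤ 0 := mul_nonpos_of_nonneg_of_nonpos hτ0 h3
    have hγsq : γ * (2 * (‖z - u‖ * ‖u - zplus‖)) ≤ γ * (‖z - u‖^2 + ‖u - zplus‖^2) :=
      mul_le_mul_of_nonneg_left hsq (le_of_lt hγ0)
    have hτeq : τ * (L * ‖z - u‖ * ‖u - zplus‖) = γ * (‖z - u‖ * ‖u - zplus‖) := by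
      rw [← hτL]; ring
    have hmul1 : τ * (inner ℝ (F u) (w - zplus) : ℝ)
        = τ * inner ℝ (F u) (w - u) + τ * (inner ℝ (F u - F z) (u - zplus) : ℝ)
          + τ * (inner ℝ (F z) (u - zplus) : ℝ) := by rw [hs1, hs2]; ring
    linarith [h1, h2, hmul6, hmul3, hγsq, hA, hB, hmul1, hτeq]
  -- triangle
  have htri : ‖z - zplus‖ ≤ ‖z - u‖ + ‖u - zplus‖ := by
    have := norm_add_le (z - u) (u - zplus)
    rwa [show (z - u) + (u - zplus) = z - zplus by abel] at this
  have htri2 : ‖z - zplus‖^2 ≤ 2 * (‖z - u‖^2 + ‖u - zplus‖^2) := by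
    nlinarith [norm_nonneg (z - zplus), norm_nonneg (z - u), norm_nonneg (u - zplus),
      sq_nonneg (‖z - u‖ - ‖u - zplus‖)]
  -- finish
  have hfin : infDist zplus Zstar ≤ ‖zplus - w‖ := by
    have := infDist_le_dist_of_mem (x := zplus) hwZ
    rwa [dist_eq_norm] at this
  have hfin2 : infDist zplus Zstar ^ 2 ≤ ‖zplus - w‖ ^ 2 :=
    pow_le_pow_left₀ infDist_nonneg hfin 2
  have hzw : infDist z Zstar = ‖z - w‖ := by rw [hwd, dist_eq_norm]
  rw [hzw]
  have h1γ : 0 < 1 - γ := by linarith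
  have hm : ((1 - γ) / 2) * ‖z - zplus‖^2
      ≤ ((1 - γ) / 2) * (2 * (‖z - u‖^2 + ‖u - zplus‖^2)) :=
    mul_le_mul_of_nonneg_left htri2 (by linarith)
  linarith [key, hfin2, hm]
end

section
/- Let X = {x ∈ ℝ² : 0 ≤ x₁ ≤ 1, 0 ≤ x₂ ≤ 1, x₁ + x₂ ≤ 3/2} and F(x) = ((x₁ + x₂)/2 − 2, (x₁ + x₂)/2 − 2). Then the solution set of the variational inequality, {x ∈ X : ⟪F(x), y − x⟫ ≥ 0 for all y ∈ X}, equals {x ∈ ℝ² : 1/2 ≤ x₁ ≤ 1 and x₁ + x₂ = 3/2}. -/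
/-- The feasible polytope `X = {x : 0 ≤ x₁ ≤ 1, 0 ≤ x₂ ≤ 1, x₁ + x₂ ≤ 3/2}`. -/
def Xset : Set (EuclideanSpace ℝ (Fin 2)) :=
  {x | 0 ≤ x 0 ∧ x 0 ≤ 1 ∧ 0 ≤ x 1 ∧ x 1 ≤ 1 ∧ x 0 + x 1 ≤ 3 / 2}

/-- The monotone affine operator `F(x) = ((x₁+x₂)/2 − 2, (x₁+x₂)/2 − 2)`. -/
noncomputable def Fmap (x : EuclideanSpace ℝ (Fin 2)) : EuclideanSpace ℝ (Fin 2) :=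
  (WithLp.equiv 2 (Fin 2 → ℝ)).symm ![(x 0 + x 1) / 2 - 2, (x 0 + x 1) / 2 - 2]

lemma inner_eq (x y : EuclideanSpace ℝ (Fin 2)) :
    (inner ℝ (Fmap x) (y - x) : ℝ)
      = ((x 0 + x 1) / 2 - 2) * ((y 0 + y 1) - (x 0 + x 1)) := by
  simp [Fmap, PiLp.inner_apply, Fin.sum_univ_two]
  ring

/-- the solution set of the VI on `X` with operator `F`. -/
theorem stmt_15 :
    {x ∈ Xset | ∀ y ∈ Xset, (0 : ℝ) ≤ inner ℝ (Fmap x) (y - x)}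
      = {x : EuclideanSpace ℝ (Fin 2) |
          1 / 2 ≤ x 0 ∧ x 0 ≤ 1 ∧ x 0 + x 1 = 3 / 2} := by
  ext x
  simp only [Set.mem_sep_iff, Set.mem_setOf_eq, Xset]
  constructor
  · rintro ⟨⟨h0, h1, h2, h3, h4⟩, hvi⟩
    set y : EuclideanSpace ℝ (Fin 2) := (WithLp.equiv 2 (Fin 2 → ℝ)).symm ![1/2, 1] with hy
    have hy0 : y 0 = 1/2 := rfl
    have hy1 : y 1 = 1 := rfl
    have hmem : (0:ℝ) ≤ y 0 ∧ y 0 ≤ 1 ∧ 0 ≤ y 1 ∧ y 1 ≤ 1 ∧ y 0 + y 1 ≤ 3/2 := by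
      rw [hy0, hy1]; norm_num
    have := hvi y hmem
    rw [inner_eq, hy0, hy1] at this
    have hsum : x 0 + x 1 = 3/2 := by nlinarith
    exact ⟨by linarith, h1, hsum⟩
  · rintro ⟨h0, h1, hsum⟩
    refine ⟨⟨by linarith, h1, by linarith, by linarith, by linarith⟩, ?_⟩
    rintro y ⟨g0, g1, g2, g3, g4⟩
    rw [inner_eq, hsum]
    nlinarith
end

section
/- Let X = {x ∈ ℝ² : 0 ≤ x₁ ≤ 1, 0 ≤ x₂ ≤ 1, x₁ + x₂ ≤ 3/2} and X* = {x ∈ ℝ² : 1/2 ≤ x₁ ≤ 1, x₁ + x₂ = 3/2}. Then ⋂_{x*∈X*} [T_X(x*) ∩ N_{X*}(x*)]° = ℝ²₊, the nonnegative orthant {x ∈ ℝ² : x₁ ≥ 0, x₂ ≥ 0}. -/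
/-- Polar of a set: `S° = {v : ⟪v, s⟫ ≤ 0 for all s ∈ S}`. -/
def polarSet {V : Type*} [NormedAddCommGroup V] [InnerProductSpace ℝ V]
    (S : Set V) : Set V :=
  {v | ∀ s ∈ S, (inner ℝ v s : ℝ) ≤ 0}

/-- Normal cone of a convex set `C` at `c`. -/
def normalConeVI {V : Type*} [NormedAddCommGroup V] [InnerProductSpace ℝ V]
    (C : Set V) (c : V) : Set V :=
  {v | ∀ w ∈ C, (inner ℝ v (w - c) : ℝ) ≤ 0}

/-- Tangent cone of a convex set `C` at `c`, as the polar of the normal cone. -/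
def tangentConeVI {V : Type*} [NormedAddCommGroup V] [InnerProductSpace ℝ V]
    (C : Set V) (c : V) : Set V :=
  polarSet (normalConeVI C c)

/-- The solution set `X* = {x : 1/2 ≤ x₁ ≤ 1, x₁ + x₂ = 3/2}`. -/
def XstarSet : Set (EuclideanSpace ℝ (Fin 2)) :=
  {x | 1 / 2 ≤ x 0 ∧ x 0 ≤ 1 ∧ x 0 + x 1 = 3 / 2}

/-- helper: vector from coordinates -/
def vec2 (a b : ℝ) : EuclideanSpace ℝ (Fin 2) := WithLp.toLp 2 ![a, b]

@[simp] lemma vec2_zero (a b : ℝ) : vec2 a b 0 = a := rfl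
@[simp] lemma vec2_one (a b : ℝ) : vec2 a b 1 = b := rfl

lemma inner2 (v w : EuclideanSpace ℝ (Fin 2)) :
    (inner ℝ v w : ℝ) = v 0 * w 0 + v 1 * w 1 := by
  simp [PiLp.inner_apply, Fin.sum_univ_two, RCLike.inner_apply, mul_comm]

@[simp] lemma sub2 (v w : EuclideanSpace ℝ (Fin 2)) (i : Fin 2) :
    (v - w) i = v i - w i := rfl

/-- the weak-sharpness cone computation for the example. -/
theorem stmt_16 :
    (⋂ xs ∈ XstarSet, polarSet (tangentConeVI Xset xs ∩ normalConeVI XstarSet xs))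
      = {x : EuclideanSpace ℝ (Fin 2) | 0 ≤ x 0 ∧ 0 ≤ x 1} := by
  ext x
  simp only [Set.mem_iInter, Set.mem_setOf_eq]
  constructor
  · intro hx
    constructor
    · -- use xs = (1/2, 1), v = (-1, 0)
      have hxs : (vec2 (1/2) 1) ∈ XstarSet := by
        simp [XstarSet, Set.mem_setOf_eq]; norm_num
      have hv : vec2 (-1) 0 ∈ tangentConeVI Xset (vec2 (1/2) 1) ∩
          normalConeVI XstarSet (vec2 (1/2) 1) := by
        constructor
        · intro n hn
          have h1 : vec2 0 1 ∈ Xset := by simp [Xset, Set.mem_setOf_eq]; norm_num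
          have := hn _ h1
          rw [inner2] at this ⊢
          simp at this ⊢
          linarith
        · intro w hw
          obtain ⟨h1, h2, h3⟩ := hw
          rw [inner2]
          simp
          linarith
      have := hx _ hxs _ hv
      rw [inner2] at this
      simp at this
      linarith
    · -- use xs = (1, 1/2), v = (0, -1)
      have hxs : (vec2 1 (1/2)) ∈ XstarSet := by
        simp [XstarSet, Set.mem_setOf_eq]; norm_num
      have hv : vec2 0 (-1) ∈ tangentConeVI Xset (vec2 1 (1/2)) ∩
          normalConeVI XstarSet (vec2 1 (1/2)) := by
        constructor
        · intro n hn
          have h1 : vec2 1 0 ∈ Xset := by simp [Xset, Set.mem_setOf_eq]; norm_num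
          have := hn _ h1
          rw [inner2] at this ⊢
          simp at this ⊢
          linarith
        · intro w hw
          obtain ⟨h1, h2, h3⟩ := hw
          rw [inner2]
          simp
          linarith
      have := hx _ hxs _ hv
      rw [inner2] at this
      simp at this
      linarith
  · rintro ⟨hx0, hx1⟩ xs hxs v ⟨hvT, hvN⟩
    obtain ⟨ha1, ha2, ha3⟩ := hxs
    -- first: v 0 + v 1 ≤ 0, from normal (1,1)
    have hsum : v 0 + v 1 ≤ 0 := by
      have hn : vec2 1 1 ∈ normalConeVI Xset xs := by
        intro w hw
        obtain ⟨_, _, _, _, h5⟩ := hw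
        rw [inner2]; simp; linarith
      have := hvT _ hn
      rw [inner2] at this; simp at this; linarith
    have hv0 : v 0 ≤ 0 ∧ v 1 ≤ 0 := by
      rcases eq_or_lt_of_le ha1 with h | h
      · -- xs = (1/2, 1)
        have hb : xs 1 = 1 := by linarith
        have h1 : v 1 ≤ 0 := by
          have hn : vec2 0 1 ∈ normalConeVI Xset xs := by
            intro w hw
            obtain ⟨_, _, _, h4, _⟩ := hw
            rw [inner2]; simp; linarith
          have := hvT _ hn
          rw [inner2] at this; simp at this; linarith
        have h2 : v 0 ≤ v 1 := by
          have hw : vec2 1 (1/2) ∈ XstarSet := by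
            refine ⟨by norm_num, by norm_num, by norm_num⟩
          have := hvN _ hw
          rw [inner2] at this; simp [← h, hb] at this; linarith
        exact ⟨le_trans h2 h1, h1⟩
      · rcases eq_or_lt_of_le ha2 with h' | h'
        · -- xs = (1, 1/2)
          have hb : xs 1 = 1/2 := by linarith
          have h1 : v 0 ≤ 0 := by
            have hn : vec2 1 0 ∈ normalConeVI Xset xs := by
              intro w hw
              obtain ⟨_, h2', _, _, _⟩ := hw
              rw [inner2]; simp; linarith
            have := hvT _ hn
            rw [inner2] at this; simp at this; linarith
          have h2 : v 1 ≤ v 0 := by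
            have hw : vec2 (1/2) 1 ∈ XstarSet := by
              refine ⟨by norm_num, by norm_num, by norm_num⟩
            have := hvN _ hw
            rw [inner2] at this; simp [h', hb] at this; linarith
          exact ⟨h1, le_trans h2 h1⟩
        · -- 1/2 < xs 0 < 1
          have hw1 : vec2 1 (1/2) ∈ XstarSet := by
            refine ⟨by norm_num, by norm_num, by norm_num⟩
          have hw2 : vec2 (1/2) 1 ∈ XstarSet := by
            refine ⟨by norm_num, by norm_num, by norm_num⟩
          have t1 := hvN _ hw1
          have t2 := hvN _ hw2
          rw [inner2] at t1 t2; simp at t1 t2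
          constructor <;> nlinarith [t1, t2, hsum, h, h', ha3]
    rw [inner2]
    nlinarith [hv0.1, hv0.2, hx0, hx1]
end
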